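/- arXiv:1909.07119 — 2 statements merged into one kernel-verified Lean document; each statement's English description precedes it below -/
import Mathlib

section
/- Let M ⊆ ℝ² be a closed set, x ∈ M and v ∈ S¹ a unit vector. Suppose there are closed sets M₁, …, M_N ⊆ ℝ² with M = ⋃_{j=1}^N M_j such that for every nonempty subset I ⊆ {1, …, N} the set M_I = ⋂_{j∈I} M_j contains x and is of type T^i at x in direction v for some i ∈ {1, 2, 3, 4, 5}. Then M is of type 𝒯^i at x in direction v for some i ∈ {1, 2, 3}. -/
open Set
open scoped RealInnerProductSpace

/-- The rotation of `v ∈ ℝ²` by `+90°`. -/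
noncomputable def rot90 (v : EuclideanSpace ℝ (Fin 2)) : EuclideanSpace ℝ (Fin 2) :=
  !₂[-(v 1), v 0]

/-- For `z ∈ ℝ²` and a unit vector `v`, the unique orientation-preserving isometry `γ_{z,v}`
of `ℝ²` mapping `0` to `z` and `(1,0)` to `z + v`. -/
noncomputable def gammaMap (z v : EuclideanSpace ℝ (Fin 2)) :
    EuclideanSpace ℝ (Fin 2) → EuclideanSpace ℝ (Fin 2) :=
  fun p => z + p 0 • v + p 1 • rot90 v

/-- The cone `A_r^u = {(x,y) : 0 ≤ x < r, −xu ≤ y ≤ xu}`. -/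
def coneSet (r u : ℝ) : Set (EuclideanSpace ℝ (Fin 2)) :=
  {p | 0 ≤ p 0 ∧ p 0 < r ∧ -(p 0 * u) ≤ p 1 ∧ p 1 ≤ p 0 * u}

/-- `f` is DCR on the set `J ⊆ ℝ`: it agrees on `J` with a difference of two convex
functions defined on an open interval containing `J`. -/
def IsDCROn (f : ℝ → ℝ) (J : Set ℝ) : Prop :=
  ∃ (O : Set ℝ) (g h : ℝ → ℝ), IsOpen O ∧ Convex ℝ O ∧ J ⊆ O ∧
    ConvexOn ℝ O g ∧ ConvexOn ℝ O h ∧ ∀ x ∈ J, f x = g x - h x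

/-- The graph of `f` over `[0, r)`, as a subset of `ℝ²`. -/
def graphOn (f : ℝ → ℝ) (r : ℝ) : Set (EuclideanSpace ℝ (Fin 2)) :=
  (fun x => (!₂[x, f x] : EuclideanSpace ℝ (Fin 2))) '' Ico 0 r

/-- The hypograph `{(x,y) : x ∈ [0,r), y ≤ f x}`. -/
def hypOn (f : ℝ → ℝ) (r : ℝ) : Set (EuclideanSpace ℝ (Fin 2)) :=
  {p | p 0 ∈ Ico 0 r ∧ p 1 ≤ f (p 0)}

/-- The epigraph `{(x,y) : x ∈ [0,r), y ≥ f x}`. -/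
def epiOn (f : ℝ → ℝ) (r : ℝ) : Set (EuclideanSpace ℝ (Fin 2)) :=
  {p | p 0 ∈ Ico 0 r ∧ f (p 0) ≤ p 1}

/-- `M` is a `T¹_{r,u}`-set. -/
def IsT1Set (M : Set (EuclideanSpace ℝ (Fin 2))) (r u : ℝ) : Prop :=
  M ∩ coneSet r (2 * u) = {0}

/-- `M` is a `T²_{r,u}`-set. -/
def IsT2Set (M : Set (EuclideanSpace ℝ (Fin 2))) (r u : ℝ) : Prop :=
  coneSet r (2 * u) ⊆ M

/-- `M` is a `T³_{r,u}`-set. -/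
def IsT3Set (M : Set (EuclideanSpace ℝ (Fin 2))) (r u : ℝ) : Prop :=
  ∃ U : ℝ → ℝ, IsDCROn U (Ico 0 r) ∧ HasDerivWithinAt U 0 (Ici 0) 0 ∧
    graphOn U r ⊆ coneSet r u ∧ M ∩ coneSet r (2 * u) = hypOn U r ∩ coneSet r (2 * u)

/-- `M` is a `T⁴_{r,u}`-set. -/
def IsT4Set (M : Set (EuclideanSpace ℝ (Fin 2))) (r u : ℝ) : Prop :=
  ∃ L : ℝ → ℝ, IsDCROn L (Ico 0 r) ∧ HasDerivWithinAt L 0 (Ici 0) 0 ∧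
    graphOn L r ⊆ coneSet r u ∧ M ∩ coneSet r (2 * u) = epiOn L r ∩ coneSet r (2 * u)

/-- `M` is a `T⁵_{r,u}`-set. -/
def IsT5Set (M : Set (EuclideanSpace ℝ (Fin 2))) (r u : ℝ) : Prop :=
  ∃ U L : ℝ → ℝ, IsDCROn U (Ico 0 r) ∧ IsDCROn L (Ico 0 r) ∧
    (∀ x ∈ Ico 0 r, L x ≤ U x) ∧
    HasDerivWithinAt U 0 (Ici 0) 0 ∧ HasDerivWithinAt L 0 (Ici 0) 0 ∧
    graphOn U r ⊆ coneSet r u ∧ graphOn L r ⊆ coneSet r u ∧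
    M ∩ coneSet r (2 * u) = hypOn U r ∩ epiOn L r

/-- `M` is a `𝒯³_{r,u}`-set. -/
def IsTT3Set (M : Set (EuclideanSpace ℝ (Fin 2))) (r u : ℝ) : Prop :=
  frontier M ∩ coneSet r (2 * u) ⊆ coneSet r u ∧
  ∃ (n : ℕ) (f : ℕ → ℝ → ℝ),
    (∀ i < n, IsDCROn (f i) (Ico 0 r) ∧ HasDerivWithinAt (f i) 0 (Ici 0) 0) ∧
    (∀ i, i + 1 < n → ∀ x ∈ Ico 0 r, f i x ≤ f (i + 1) x) ∧
    frontier M ∩ coneSet r u = ⋃ i ∈ Finset.range n, graphOn (f i) r ∧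
    (∀ i, i + 1 < n → (∃ x ∈ Ioo 0 r, f i x = f (i + 1) x) →
      {p : EuclideanSpace ℝ (Fin 2) |
        p 0 ∈ Ico 0 r ∧ f i (p 0) ≤ p 1 ∧ p 1 ≤ f (i + 1) (p 0)} ⊆ M)

/-- `M` is of type `T¹` at `x` in direction `v`. -/
def OfTypeT1 (M : Set (EuclideanSpace ℝ (Fin 2))) (x v : EuclideanSpace ℝ (Fin 2)) : Prop :=
  ∃ r u : ℝ, 0 < r ∧ 0 < u ∧ IsT1Set (gammaMap x v ⁻¹' M) r u

/-- `M` is of type `T²` at `x` in direction `v`. -/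
def OfTypeT2 (M : Set (EuclideanSpace ℝ (Fin 2))) (x v : EuclideanSpace ℝ (Fin 2)) : Prop :=
  ∃ r u : ℝ, 0 < r ∧ 0 < u ∧ IsT2Set (gammaMap x v ⁻¹' M) r u

/-- `M` is of type `T³` at `x` in direction `v`. -/
def OfTypeT3 (M : Set (EuclideanSpace ℝ (Fin 2))) (x v : EuclideanSpace ℝ (Fin 2)) : Prop :=
  ∃ r u : ℝ, 0 < r ∧ 0 < u ∧ IsT3Set (gammaMap x v ⁻¹' M) r u

/-- `M` is of type `T⁴` at `x` in direction `v`. -/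
def OfTypeT4 (M : Set (EuclideanSpace ℝ (Fin 2))) (x v : EuclideanSpace ℝ (Fin 2)) : Prop :=
  ∃ r u : ℝ, 0 < r ∧ 0 < u ∧ IsT4Set (gammaMap x v ⁻¹' M) r u

/-- `M` is of type `T⁵` at `x` in direction `v`. -/
def OfTypeT5 (M : Set (EuclideanSpace ℝ (Fin 2))) (x v : EuclideanSpace ℝ (Fin 2)) : Prop :=
  ∃ r u : ℝ, 0 < r ∧ 0 < u ∧ IsT5Set (gammaMap x v ⁻¹' M) r u

/-- `M` is of type `𝒯¹` at `x` in direction `v`. -/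
def OfTypeTT1 (M : Set (EuclideanSpace ℝ (Fin 2))) (x v : EuclideanSpace ℝ (Fin 2)) : Prop :=
  ∃ r u : ℝ, 0 < r ∧ 0 < u ∧ IsT1Set (gammaMap x v ⁻¹' M) r u

/-- `M` is of type `𝒯²` at `x` in direction `v`. -/
def OfTypeTT2 (M : Set (EuclideanSpace ℝ (Fin 2))) (x v : EuclideanSpace ℝ (Fin 2)) : Prop :=
  ∃ r u : ℝ, 0 < r ∧ 0 < u ∧ IsT2Set (gammaMap x v ⁻¹' M) r u

/-- `M` is of type `𝒯³` at `x` in direction `v`. -/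
def OfTypeTT3 (M : Set (EuclideanSpace ℝ (Fin 2))) (x v : EuclideanSpace ℝ (Fin 2)) : Prop :=
  ∃ r u : ℝ, 0 < r ∧ 0 < u ∧ IsTT3Set (gammaMap x v ⁻¹' M) r u

/-- `M ⊆ ℝ²` is a DC graph. -/
def IsDCGraph (M : Set (EuclideanSpace ℝ (Fin 2))) : Prop :=
  ∃ v w : EuclideanSpace ℝ (Fin 2), ‖v‖ = 1 ∧ ‖w‖ = 1 ∧ ⟪v, w⟫ = 0 ∧
    ∃ K O : Set ℝ, IsClosed K ∧ Convex ℝ K ∧ IsOpen O ∧ Convex ℝ O ∧ K ⊆ O ∧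
      ∃ g h : ℝ → ℝ, ConvexOn ℝ O g ∧ ConvexOn ℝ O h ∧
        M = (fun t => t • w + (g t - h t) • v) '' K

-- ====== my prelims ======
noncomputable section
open Filter Topology Asymptotics

abbrev E2 := EuclideanSpace ℝ (Fin 2)

def mk2 (x y : ℝ) : E2 := !₂[x, y]

@[simp] lemma mk2_c0 (x y : ℝ) : mk2 x y 0 = x := rfl
@[simp] lemma mk2_c1 (x y : ℝ) : mk2 x y 1 = y := rfl

lemma mk2_eta (p : E2) : mk2 (p 0) (p 1) = p := by
  ext i; fin_cases i <;> rfl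

@[simp] lemma zero_c0 : (0 : E2) 0 = 0 := rfl
@[simp] lemma zero_c1 : (0 : E2) 1 = 0 := rfl

lemma mk2_zero : mk2 0 0 = (0 : E2) := by
  ext i; fin_cases i <;> rfl

lemma dist_mk2 (x y x' y' : ℝ) :
    dist (mk2 x y) (mk2 x' y') = Real.sqrt ((x - x')^2 + (y - y')^2) := by
  rw [EuclideanSpace.dist_eq, Fin.sum_univ_two]
  simp [mk2, Real.dist_eq, sq_abs]

lemma cont_c0 : Continuous (fun p : E2 => p 0) := (EuclideanSpace.proj (0 : Fin 2)).continuous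
lemma cont_c1 : Continuous (fun p : E2 => p 1) := (EuclideanSpace.proj (1 : Fin 2)).continuous

lemma mem_coneSet {p : E2} {r u : ℝ} :
    p ∈ coneSet r u ↔ 0 ≤ p 0 ∧ p 0 < r ∧ -(p 0 * u) ≤ p 1 ∧ p 1 ≤ p 0 * u := Iff.rfl

lemma zero_mem_coneSet {r u : ℝ} (hr : 0 < r) : (0 : E2) ∈ coneSet r u := by
  refine ⟨le_refl _, ?_, ?_, ?_⟩ <;> simp [hr]

lemma coneSet_mono {r u r' u' : ℝ} (hr : r' ≤ r) (hu : u' ≤ u) (h0 : 0 ≤ u') :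
    coneSet r' u' ⊆ coneSet r u := by
  rintro p ⟨h1, h2, h3, h4⟩
  have hmono : p 0 * u' ≤ p 0 * u := mul_le_mul_of_nonneg_left hu h1
  exact ⟨h1, lt_of_lt_of_le h2 hr, le_trans (by linarith) h3, le_trans h4 hmono⟩

lemma coneSet_eq_zero {p : E2} {r u : ℝ} (hp : p ∈ coneSet r u) (h0 : p 0 = 0) : p = 0 := by
  obtain ⟨h1, h2, h3, h4⟩ := hp
  rw [h0] at h3 h4
  have : p 1 = 0 := le_antisymm (by simpa using h4) (by simpa using h3)
  rw [← mk2_eta p, h0, this, mk2_zero]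

lemma mk2_mem_graphOn {f : ℝ → ℝ} {r t : ℝ} (ht : t ∈ Ico (0:ℝ) r) :
    mk2 t (f t) ∈ graphOn f r := ⟨t, ht, rfl⟩

lemma memGraphOn {f : ℝ → ℝ} {r : ℝ} {p : E2} :
    p ∈ graphOn f r ↔ p 0 ∈ Ico (0:ℝ) r ∧ p 1 = f (p 0) := by
  constructor
  · rintro ⟨t, ht, rfl⟩; exact ⟨ht, rfl⟩
  · rintro ⟨h1, h2⟩
    refine ⟨p 0, h1, ?_⟩
    show mk2 (p 0) (f (p 0)) = p
    rw [← h2, mk2_eta p]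

end
-- ====== DCR lemmas ======
section DCR
open Filter Topology Asymptotics Set

lemma IsDCROn.mono {f : ℝ → ℝ} {J J' : Set ℝ} (h : IsDCROn f J) (hJ : J' ⊆ J) :
    IsDCROn f J' := by
  obtain ⟨O, g, h', hO, hC, hJO, hg, hh, heq⟩ := h
  exact ⟨O, g, h', hO, hC, hJ.trans hJO, hg, hh, fun x hx => heq x (hJ hx)⟩

lemma IsDCROn.continuousOn {f : ℝ → ℝ} {J : Set ℝ} (h : IsDCROn f J) :
    ContinuousOn f J := by
  obtain ⟨O, g, h', hO, hC, hJO, hg, hh, heq⟩ := h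
  have : ContinuousOn (fun x => g x - h' x) J :=
    ((hg.continuousOn hO).mono hJO).sub ((hh.continuousOn hO).mono hJO)
  exact this.congr heq

private lemma max_sub_eq (A B C D : ℝ) :
    max (A - B) (C - D) = max (A + D) (C + B) - (B + D) := by
  rcases le_total (A - B) (C - D) with h | h
  · rw [max_eq_right h, max_eq_right (by linarith)]; ring
  · rw [max_eq_left h, max_eq_left (by linarith)]; ring

lemma IsDCROn.max {f g : ℝ → ℝ} {J : Set ℝ} (hf : IsDCROn f J) (hg : IsDCROn g J) :
    IsDCROn (fun x => Max.max (f x) (g x)) J := by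
  obtain ⟨O1, g1, h1, hO1, hC1, hJ1, hg1, hh1, he1⟩ := hf
  obtain ⟨O2, g2, h2, hO2, hC2, hJ2, hg2, hh2, he2⟩ := hg
  refine ⟨O1 ∩ O2, fun x => Max.max (g1 x + h2 x) (g2 x + h1 x), fun x => h1 x + h2 x,
    hO1.inter hO2, hC1.inter hC2, subset_inter hJ1 hJ2, ?_, ?_, ?_⟩
  · exact ((hg1.subset inter_subset_left (hC1.inter hC2)).add
      (hh2.subset inter_subset_right (hC1.inter hC2))).sup
      ((hg2.subset inter_subset_right (hC1.inter hC2)).add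
      (hh1.subset inter_subset_left (hC1.inter hC2)))
  · exact (hh1.subset inter_subset_left (hC1.inter hC2)).add
      (hh2.subset inter_subset_right (hC1.inter hC2))
  · intro x hx
    show Max.max (f x) (g x) = Max.max (g1 x + h2 x) (g2 x + h1 x) - (h1 x + h2 x)
    rw [he1 x hx, he2 x hx, max_sub_eq]

lemma IsDCROn.neg {f : ℝ → ℝ} {J : Set ℝ} (hf : IsDCROn f J) :
    IsDCROn (fun x => -(f x)) J := by
  obtain ⟨O, g, h, hO, hC, hJ, hg, hh, he⟩ := hf
  refine ⟨O, h, g, hO, hC, hJ, hh, hg, fun x hx => ?_⟩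
  show -(f x) = h x - g x
  rw [he x hx]; ring

lemma IsDCROn.min {f g : ℝ → ℝ} {J : Set ℝ} (hf : IsDCROn f J) (hg : IsDCROn g J) :
    IsDCROn (fun x => Min.min (f x) (g x)) J := by
  have h := (hf.neg.max hg.neg).neg
  have heq : (fun x => -(Max.max (-(f x)) (-(g x)))) = fun x => Min.min (f x) (g x) := by
    funext x
    rw [max_neg_neg, neg_neg]
  rwa [heq] at h

lemma isDCROn_inf' {ι : Type*} {s : Finset ι} (hs : s.Nonempty) {a : ι → ℝ → ℝ} {J : Set ℝ}
    (h : ∀ i ∈ s, IsDCROn (a i) J) :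
    IsDCROn (fun x => s.inf' hs (fun i => a i x)) J := by
  induction hs using Finset.Nonempty.cons_induction with
  | singleton i => simpa using h i (by simp)
  | cons i s hi hs ih =>
      have h1 : IsDCROn (a i) J := h i (by simp)
      have h2 := ih (fun j hj => h j (by simp [hj]))
      have : (fun x => (Finset.cons i s hi).inf' (by simp) (fun j => a j x))
          = fun x => Min.min (a i x) (s.inf' hs (fun j => a j x)) := by
        funext x; rw [Finset.inf'_cons]
      rw [this]
      exact h1.min h2

lemma isDCROn_sup' {ι : Type*} {s : Finset ι} (hs : s.Nonempty) {a : ι → ℝ → ℝ} {J : Set ℝ}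
    (h : ∀ i ∈ s, IsDCROn (a i) J) :
    IsDCROn (fun x => s.sup' hs (fun i => a i x)) J := by
  induction hs using Finset.Nonempty.cons_induction with
  | singleton i => simpa using h i (by simp)
  | cons i s hi hs ih =>
      have h1 : IsDCROn (a i) J := h i (by simp)
      have h2 := ih (fun j hj => h j (by simp [hj]))
      have : (fun x => (Finset.cons i s hi).sup' (by simp) (fun j => a j x))
          = fun x => Max.max (a i x) (s.sup' hs (fun j => a j x)) := by
        funext x; rw [Finset.sup'_cons]
      rw [this]
      exact h1.max h2

/-- Derivative-0 via selection from finitely many functions with derivative 0. -/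
lemma hasDeriv_zero_of_selection {ι : Type*} {s : Finset ι} {a : ι → ℝ → ℝ} {f : ℝ → ℝ} {r : ℝ}
    (hr : 0 < r)
    (ha : ∀ i ∈ s, HasDerivWithinAt (a i) 0 (Ici 0) 0)
    (ha0 : ∀ i ∈ s, a i 0 = 0) (hf0 : f 0 = 0)
    (hsel : ∀ x ∈ Ico (0:ℝ) r, ∃ i ∈ s, f x = a i x) :
    HasDerivWithinAt f 0 (Ici 0) 0 := by
  rw [hasDerivWithinAt_iff_isLittleO]
  simp only [sub_zero, smul_zero, hf0]
  rw [isLittleO_iff]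
  intro c hc
  have hbase : ∀ i ∈ s, ∀ᶠ x in nhdsWithin 0 (Ici 0), ‖a i x‖ ≤ c * ‖x‖ := by
    intro i hi
    have := (hasDerivWithinAt_iff_isLittleO.1 (ha i hi))
    simp only [sub_zero, smul_zero, ha0 i hi] at this
    exact (isLittleO_iff.1 this) hc
  have hall : ∀ᶠ x in nhdsWithin 0 (Ici 0), ∀ i ∈ s, ‖a i x‖ ≤ c * ‖x‖ :=
    (Filter.eventually_all_finset s).2 hbase
  have hIco : ∀ᶠ x in nhdsWithin 0 (Ici 0), x ∈ Ico (0:ℝ) r := by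
    have h1 : Ico (0:ℝ) r ∈ nhdsWithin 0 (Ici 0) := by
      rw [mem_nhdsWithin]
      exact ⟨Iio r, isOpen_Iio, hr, fun x hx => ⟨hx.2, hx.1⟩⟩
    exact h1
  filter_upwards [hall, hIco] with x h1 h2
  obtain ⟨i, hi, heq⟩ := hsel x h2
  rw [heq]
  exact h1 i hi

/-- From derivative 0 we get a linear bound near 0. -/
lemma bound_of_deriv_zero {f : ℝ → ℝ} (hf : HasDerivWithinAt f 0 (Ici 0) 0)
    (hf0 : f 0 = 0) {c : ℝ} (hc : 0 < c) :
    ∃ δ > 0, ∀ x ∈ Ico (0:ℝ) δ, |f x| ≤ c * x := by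
  have h := hasDerivWithinAt_iff_isLittleO.1 hf
  simp only [sub_zero, smul_zero, hf0] at h
  have h2 := (isLittleO_iff.1 h) hc
  rw [eventually_nhdsWithin_iff] at h2
  obtain ⟨ε, hε, hball⟩ := Metric.eventually_nhds_iff.1 h2
  refine ⟨ε, hε, fun x hx => ?_⟩
  have hd : dist x 0 < ε := by
    rw [Real.dist_eq, sub_zero, abs_of_nonneg hx.1]; exact hx.2
  have := hball hd hx.1
  simpa [Real.norm_eq_abs, abs_of_nonneg hx.1] using this

end DCR
-- ====== normalized descriptions ======
section DescSec
open Set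

def IsT1Set' (M : Set E2) (r u : ℝ) : Prop := M ∩ coneSet r (2 * u) = {0}
def IsT2Set' (M : Set E2) (r u : ℝ) : Prop := coneSet r (2 * u) ⊆ M

/-- Normalized type-3 description: width `u/2` graph bound, equality on the `2u`-cone. -/
def T3H (S : Set E2) (r u : ℝ) : Prop :=
  ∃ U : ℝ → ℝ, IsDCROn U (Ico 0 r) ∧ HasDerivWithinAt U 0 (Ici 0) 0 ∧ U 0 = 0 ∧
    (∀ x ∈ Ico (0:ℝ) r, |U x| ≤ u/2 * x) ∧
    S ∩ coneSet r (2*u) = hypOn U r ∩ coneSet r (2*u)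

def T4H (S : Set E2) (r u : ℝ) : Prop :=
  ∃ L : ℝ → ℝ, IsDCROn L (Ico 0 r) ∧ HasDerivWithinAt L 0 (Ici 0) 0 ∧ L 0 = 0 ∧
    (∀ x ∈ Ico (0:ℝ) r, |L x| ≤ u/2 * x) ∧
    S ∩ coneSet r (2*u) = epiOn L r ∩ coneSet r (2*u)

def T5H (S : Set E2) (r u : ℝ) : Prop :=
  ∃ U L : ℝ → ℝ, IsDCROn U (Ico 0 r) ∧ IsDCROn L (Ico 0 r) ∧
    HasDerivWithinAt U 0 (Ici 0) 0 ∧ HasDerivWithinAt L 0 (Ici 0) 0 ∧ U 0 = 0 ∧ L 0 = 0 ∧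
    (∀ x ∈ Ico (0:ℝ) r, |U x| ≤ u/2 * x) ∧ (∀ x ∈ Ico (0:ℝ) r, |L x| ≤ u/2 * x) ∧
    (∀ x ∈ Ico (0:ℝ) r, L x ≤ U x) ∧
    S ∩ coneSet r (2*u) = hypOn U r ∩ epiOn L r

def DescH (S : Set E2) (r u : ℝ) : Prop :=
  IsT1Set' S r u ∨ IsT2Set' S r u ∨ T3H S r u ∨ T4H S r u ∨ T5H S r u

lemma graph_bound {U : ℝ → ℝ} {r u : ℝ} (h : graphOn U r ⊆ coneSet r u) :
    ∀ x ∈ Ico (0:ℝ) r, |U x| ≤ u * x := by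
  intro x hx
  have := h (mk2_mem_graphOn hx)
  rw [mem_coneSet] at this
  simp only [mk2_c0, mk2_c1] at this
  rw [abs_le]
  constructor <;> [linarith [this.2.2.1]; linarith [this.2.2.2]]

lemma mem_hypOn {f : ℝ → ℝ} {r : ℝ} {p : E2} :
    p ∈ hypOn f r ↔ p 0 ∈ Ico (0:ℝ) r ∧ p 1 ≤ f (p 0) := Iff.rfl
lemma mem_epiOn {f : ℝ → ℝ} {r : ℝ} {p : E2} :
    p ∈ epiOn f r ↔ p 0 ∈ Ico (0:ℝ) r ∧ f (p 0) ≤ p 1 := Iff.rfl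

/-- Shrinking the width (and the radius) of a generic description gives a normalized one. -/
lemma DescH_of_Desc {S : Set E2} {r u u' : ℝ} (hr : 0 < r) (hu : 0 < u) (hu' : 0 < u')
    (huu : u' ≤ u)
    (hd : IsT1Set S r u ∨ IsT2Set S r u ∨ IsT3Set S r u ∨ IsT4Set S r u ∨ IsT5Set S r u) :
    ∃ r', 0 < r' ∧ r' ≤ r ∧ DescH S r' u' := by
  have hcone : coneSet r (2*u') ⊆ coneSet r (2*u) :=
    coneSet_mono le_rfl (by linarith) (by linarith)
  rcases hd with h | h | h | h | h
  · -- T1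
    refine ⟨r, hr, le_rfl, Or.inl ?_⟩
    have h0 : (0:E2) ∈ S := by
      have : (0:E2) ∈ S ∩ coneSet r (2*u) := h ▸ rfl
      exact this.1
    apply Subset.antisymm
    · intro p hp
      have : p ∈ S ∩ coneSet r (2*u) := ⟨hp.1, hcone hp.2⟩
      rwa [h] at this
    · rintro p rfl
      exact ⟨h0, zero_mem_coneSet hr⟩
  · -- T2
    exact ⟨r, hr, le_rfl, Or.inr (Or.inl (fun p hp => h (hcone hp)))⟩
  · -- T3
    obtain ⟨U, hdcr, hder, hgr, heq⟩ := h
    have hU0 : U 0 = 0 := by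
      have := graph_bound hgr 0 ⟨le_rfl, hr⟩
      simp at this
      linarith [abs_nonneg (U 0), this]
    obtain ⟨δ, hδ, hbd⟩ := bound_of_deriv_zero hder hU0 (by positivity : (0:ℝ) < u'/2)
    refine ⟨min r δ, lt_min hr hδ, min_le_left _ _, Or.inr (Or.inr (Or.inl ⟨U, ?_, hder, hU0, ?_, ?_⟩))⟩
    · exact hdcr.mono (Ico_subset_Ico le_rfl (min_le_left _ _))
    · exact fun x hx => hbd x ⟨hx.1, lt_of_lt_of_le hx.2 (min_le_right _ _)⟩
    · have hcone' : coneSet (min r δ) (2*u') ⊆ coneSet r (2*u) :=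
        coneSet_mono (min_le_left _ _) (by linarith) (by linarith)
      apply Subset.antisymm
      · rintro p ⟨hpS, hpc⟩
        have : p ∈ hypOn U r ∩ coneSet r (2*u) := by rw [← heq]; exact ⟨hpS, hcone' hpc⟩
        exact ⟨⟨⟨hpc.1, hpc.2.1⟩, this.1.2⟩, hpc⟩
      · rintro p ⟨hph, hpc⟩
        have hpr : p ∈ hypOn U r ∩ coneSet r (2*u) :=
          ⟨⟨⟨hph.1.1, lt_of_lt_of_le hph.1.2 (min_le_left _ _)⟩, hph.2⟩, hcone' hpc⟩
        rw [← heq] at hpr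
        exact ⟨hpr.1, hpc⟩
  · -- T4
    obtain ⟨L, hdcr, hder, hgr, heq⟩ := h
    have hL0 : L 0 = 0 := by
      have := graph_bound hgr 0 ⟨le_rfl, hr⟩
      simp at this
      linarith [abs_nonneg (L 0), this]
    obtain ⟨δ, hδ, hbd⟩ := bound_of_deriv_zero hder hL0 (by positivity : (0:ℝ) < u'/2)
    refine ⟨min r δ, lt_min hr hδ, min_le_left _ _,
      Or.inr (Or.inr (Or.inr (Or.inl ⟨L, ?_, hder, hL0, ?_, ?_⟩)))⟩
    · exact hdcr.mono (Ico_subset_Ico le_rfl (min_le_left _ _))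
    · exact fun x hx => hbd x ⟨hx.1, lt_of_lt_of_le hx.2 (min_le_right _ _)⟩
    · have hcone' : coneSet (min r δ) (2*u') ⊆ coneSet r (2*u) :=
        coneSet_mono (min_le_left _ _) (by linarith) (by linarith)
      apply Subset.antisymm
      · rintro p ⟨hpS, hpc⟩
        have : p ∈ epiOn L r ∩ coneSet r (2*u) := by rw [← heq]; exact ⟨hpS, hcone' hpc⟩
        exact ⟨⟨⟨hpc.1, hpc.2.1⟩, this.1.2⟩, hpc⟩
      · rintro p ⟨hph, hpc⟩
        have hpr : p ∈ epiOn L r ∩ coneSet r (2*u) :=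
          ⟨⟨⟨hph.1.1, lt_of_lt_of_le hph.1.2 (min_le_left _ _)⟩, hph.2⟩, hcone' hpc⟩
        rw [← heq] at hpr
        exact ⟨hpr.1, hpc⟩
  · -- T5
    obtain ⟨U, L, hdcrU, hdcrL, hle, hderU, hderL, hgrU, hgrL, heq⟩ := h
    have hU0 : U 0 = 0 := by
      have := graph_bound hgrU 0 ⟨le_rfl, hr⟩
      simp at this
      linarith [abs_nonneg (U 0), this]
    have hL0 : L 0 = 0 := by
      have := graph_bound hgrL 0 ⟨le_rfl, hr⟩
      simp at this
      linarith [abs_nonneg (L 0), this]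
    obtain ⟨δ1, hδ1, hbd1⟩ := bound_of_deriv_zero hderU hU0 (by positivity : (0:ℝ) < u'/2)
    obtain ⟨δ2, hδ2, hbd2⟩ := bound_of_deriv_zero hderL hL0 (by positivity : (0:ℝ) < u'/2)
    set r' := min r (min δ1 δ2) with hr'
    have hr'pos : 0 < r' := lt_min hr (lt_min hδ1 hδ2)
    have hr'le : r' ≤ r := min_le_left _ _
    have hsub : Ico (0:ℝ) r' ⊆ Ico 0 r := Ico_subset_Ico le_rfl hr'le
    have hbU : ∀ x ∈ Ico (0:ℝ) r', |U x| ≤ u'/2 * x := fun x hx =>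
      hbd1 x ⟨hx.1, lt_of_lt_of_le hx.2 ((min_le_right _ _).trans (min_le_left _ _))⟩
    have hbL : ∀ x ∈ Ico (0:ℝ) r', |L x| ≤ u'/2 * x := fun x hx =>
      hbd2 x ⟨hx.1, lt_of_lt_of_le hx.2 ((min_le_right _ _).trans (min_le_right _ _))⟩
    refine ⟨r', hr'pos, hr'le, Or.inr (Or.inr (Or.inr (Or.inr
      ⟨U, L, hdcrU.mono hsub, hdcrL.mono hsub, hderU, hderL, hU0, hL0, hbU, hbL,
        fun x hx => hle x (hsub hx), ?_⟩)))⟩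
    have hcone' : coneSet r' (2*u') ⊆ coneSet r (2*u) :=
      coneSet_mono hr'le (by linarith) (by linarith)
    apply Subset.antisymm
    · rintro p ⟨hpS, hpc⟩
      have : p ∈ hypOn U r ∩ epiOn L r := by rw [← heq]; exact ⟨hpS, hcone' hpc⟩
      exact ⟨⟨⟨hpc.1, hpc.2.1⟩, this.1.2⟩, ⟨hpc.1, hpc.2.1⟩, this.2.2⟩
    · rintro p ⟨hph, hpe⟩
      have hx' : p 0 ∈ Ico (0:ℝ) r' := hph.1
      have hx : p 0 ∈ Ico (0:ℝ) r := hsub hx'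
      have hpc : p ∈ coneSet r' (2*u') := by
        refine ⟨hx'.1, hx'.2, ?_, ?_⟩
        · have := (abs_le.1 (hbL _ hx')).1
          have h2 : u'/2 * p 0 ≤ p 0 * (2*u') := by nlinarith [hx'.1, hu'.le]
          linarith [hpe.2]
        · have := (abs_le.1 (hbU _ hx')).2
          have h2 : u'/2 * p 0 ≤ p 0 * (2*u') := by nlinarith [hx'.1, hu'.le]
          linarith [hph.2]
      have : p ∈ S ∩ coneSet r (2*u) := by
        rw [heq]; exact ⟨⟨hx, hph.2⟩, hx, hpe.2⟩
      exact ⟨this.1, hpc⟩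

/-- normalized descriptions restrict to smaller radii. -/
lemma DescH.mono_r {S : Set E2} {r u r' : ℝ} (h : DescH S r u) (h0 : 0 < r') (hle : r' ≤ r)
    (hu : 0 < u) : DescH S r' u := by
  have hcone' : coneSet r' (2*u) ⊆ coneSet r (2*u) := coneSet_mono hle le_rfl (by linarith)
  have hsub : Ico (0:ℝ) r' ⊆ Ico 0 r := Ico_subset_Ico le_rfl hle
  rcases h with h | h | h | h | h
  · refine Or.inl (Subset.antisymm ?_ ?_)
    · intro p hp
      have : p ∈ S ∩ coneSet r (2*u) := ⟨hp.1, hcone' hp.2⟩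
      rwa [h] at this
    · rintro p rfl
      have h0S : (0:E2) ∈ S := by
        have : (0:E2) ∈ S ∩ coneSet r (2*u) := h ▸ rfl
        exact this.1
      exact ⟨h0S, zero_mem_coneSet h0⟩
  · exact Or.inr (Or.inl (fun p hp => h (hcone' hp)))
  · obtain ⟨U, hdcr, hder, hU0, hb, heq⟩ := h
    refine Or.inr (Or.inr (Or.inl ⟨U, hdcr.mono hsub, hder, hU0, fun x hx => hb x (hsub hx), ?_⟩))
    apply Subset.antisymm
    · rintro p ⟨hpS, hpc⟩
      have : p ∈ hypOn U r ∩ coneSet r (2*u) := by rw [← heq]; exact ⟨hpS, hcone' hpc⟩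
      exact ⟨⟨⟨hpc.1, hpc.2.1⟩, this.1.2⟩, hpc⟩
    · rintro p ⟨hph, hpc⟩
      have hpr : p ∈ hypOn U r ∩ coneSet r (2*u) :=
        ⟨⟨hsub hph.1, hph.2⟩, hcone' hpc⟩
      rw [← heq] at hpr
      exact ⟨hpr.1, hpc⟩
  · obtain ⟨L, hdcr, hder, hL0, hb, heq⟩ := h
    refine Or.inr (Or.inr (Or.inr (Or.inl ⟨L, hdcr.mono hsub, hder, hL0,
      fun x hx => hb x (hsub hx), ?_⟩)))
    apply Subset.antisymm
    · rintro p ⟨hpS, hpc⟩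
      have : p ∈ epiOn L r ∩ coneSet r (2*u) := by rw [← heq]; exact ⟨hpS, hcone' hpc⟩
      exact ⟨⟨⟨hpc.1, hpc.2.1⟩, this.1.2⟩, hpc⟩
    · rintro p ⟨hph, hpc⟩
      have hpr : p ∈ epiOn L r ∩ coneSet r (2*u) := ⟨⟨hsub hph.1, hph.2⟩, hcone' hpc⟩
      rw [← heq] at hpr
      exact ⟨hpr.1, hpc⟩
  · obtain ⟨U, L, hdcrU, hdcrL, hderU, hderL, hU0, hL0, hbU, hbL, hle', heq⟩ := h
    refine Or.inr (Or.inr (Or.inr (Or.inr ⟨U, L, hdcrU.mono hsub, hdcrL.mono hsub, hderU, hderL,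
      hU0, hL0, fun x hx => hbU x (hsub hx), fun x hx => hbL x (hsub hx),
      fun x hx => hle' x (hsub hx), ?_⟩)))
    apply Subset.antisymm
    · rintro p ⟨hpS, hpc⟩
      have : p ∈ hypOn U r ∩ epiOn L r := by rw [← heq]; exact ⟨hpS, hcone' hpc⟩
      exact ⟨⟨⟨hpc.1, hpc.2.1⟩, this.1.2⟩, ⟨hpc.1, hpc.2.1⟩, this.2.2⟩
    · rintro p ⟨hph, hpe⟩
      have hx' : p 0 ∈ Ico (0:ℝ) r' := hph.1
      have hpc : p ∈ coneSet r' (2*u) := by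
        refine ⟨hx'.1, hx'.2, ?_, ?_⟩
        · have := (abs_le.1 (hbL _ (hsub hx'))).1
          have h2 : u/2 * p 0 ≤ p 0 * (2*u) := by nlinarith [hx'.1, hu.le]
          linarith [hpe.2]
        · have := (abs_le.1 (hbU _ (hsub hx'))).2
          have h2 : u/2 * p 0 ≤ p 0 * (2*u) := by nlinarith [hx'.1, hu.le]
          linarith [hph.2]
      have : p ∈ S ∩ coneSet r (2*u) := by
        rw [heq]; exact ⟨⟨hsub hph.1, hph.2⟩, hsub hpe.1, hpe.2⟩
      exact ⟨this.1, hpc⟩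

end DescSec
-- ====== band machinery ======
lemma isOpen_lt_on {r : ℝ} {f g : ℝ → ℝ} (hf : ContinuousOn f (Set.Ioo (0:ℝ) r))
    (hg : ContinuousOn g (Set.Ioo (0:ℝ) r)) :
    IsOpen {x : ℝ | x ∈ Set.Ioo (0:ℝ) r ∧ f x < g x} := by
  rw [isOpen_iff_mem_nhds]
  rintro x ⟨hx, hfg⟩
  have hfa : ContinuousAt f x := hf.continuousAt (isOpen_Ioo.mem_nhds hx)
  have hga : ContinuousAt g x := hg.continuousAt (isOpen_Ioo.mem_nhds hx)
  filter_upwards [hfa.eventually_lt hga hfg, isOpen_Ioo.eventually_mem hx] with y h1 h2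
  exact ⟨h2, h1⟩

section Machinery
open Set Filter Topology

attribute [local instance] Classical.propDecidable

variable {N : ℕ} (a b : Fin N → ℝ → ℝ) (𝒜 : Finset (Fin N)) (r u : ℝ)

/-- two pieces overlap everywhere -/
def Rrel (j k : Fin N) : Prop :=
  ∀ x ∈ Ico (0:ℝ) r, Max.max (a j x) (a k x) ≤ Min.min (b j x) (b k x)

def Estep (j k : Fin N) : Prop := j ∈ 𝒜 ∧ k ∈ 𝒜 ∧ Rrel a b r j k

def EClo (j k : Fin N) : Prop := Relation.ReflTransGen (Estep a b 𝒜 r) j k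

lemma Rrel.symm' {j k : Fin N} (h : Rrel a b r j k) : Rrel a b r k j := by
  intro x hx
  have := h x hx
  rw [max_comm, min_comm] at this
  exact this

lemma EClo.symm' {j k : Fin N} (h : EClo a b 𝒜 r j k) : EClo a b 𝒜 r k j := by
  have hs : Std.Symm (Estep a b 𝒜 r) := ⟨by rintro p q ⟨h1, h2, h3⟩; exact ⟨h2, h1, h3.symm' a b r⟩⟩
  exact (Relation.ReflTransGen.stdSymm (r := Estep a b 𝒜 r)).symm _ _ h

noncomputable def cls (j : Fin N) : Finset (Fin N) := 𝒜.filter (fun k => EClo a b 𝒜 r j k)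

lemma mem_cls {j k : Fin N} : k ∈ cls a b 𝒜 r j ↔ k ∈ 𝒜 ∧ EClo a b 𝒜 r j k :=
  Finset.mem_filter.trans (by tauto)

lemma self_mem_cls {j : Fin N} (hj : j ∈ 𝒜) : j ∈ cls a b 𝒜 r j :=
  (mem_cls a b 𝒜 r).2 ⟨hj, Relation.ReflTransGen.refl⟩

lemma cls_nonempty {j : Fin N} (hj : j ∈ 𝒜) : (cls a b 𝒜 r j).Nonempty :=
  ⟨j, self_mem_cls a b 𝒜 r hj⟩

lemma cls_eq_of {j k : Fin N} (h : EClo a b 𝒜 r j k) : cls a b 𝒜 r j = cls a b 𝒜 r k := by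
  ext l
  simp only [mem_cls]
  exact ⟨fun ⟨h1, h2⟩ => ⟨h1, (h.symm' a b 𝒜 r).trans h2⟩, fun ⟨h1, h2⟩ => ⟨h1, h.trans h2⟩⟩

noncomputable def Afun (j : Fin N) (x : ℝ) : ℝ :=
  if h : (cls a b 𝒜 r j).Nonempty then (cls a b 𝒜 r j).inf' h (fun k => a k x) else 0

noncomputable def Bfun (j : Fin N) (x : ℝ) : ℝ :=
  if h : (cls a b 𝒜 r j).Nonempty then (cls a b 𝒜 r j).sup' h (fun k => b k x) else 0

lemma Afun_eq {j : Fin N} (hj : j ∈ 𝒜) (x : ℝ) :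
    Afun a b 𝒜 r j x = (cls a b 𝒜 r j).inf' (cls_nonempty a b 𝒜 r hj) (fun k => a k x) :=
  dif_pos _

lemma Bfun_eq {j : Fin N} (hj : j ∈ 𝒜) (x : ℝ) :
    Bfun a b 𝒜 r j x = (cls a b 𝒜 r j).sup' (cls_nonempty a b 𝒜 r hj) (fun k => b k x) :=
  dif_pos _

lemma Afun_le {j k : Fin N} (hj : j ∈ 𝒜) (hk : k ∈ cls a b 𝒜 r j) (x : ℝ) :
    Afun a b 𝒜 r j x ≤ a k x := by
  rw [Afun_eq a b 𝒜 r hj]; exact Finset.inf'_le _ hk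

lemma le_Bfun {j k : Fin N} (hj : j ∈ 𝒜) (hk : k ∈ cls a b 𝒜 r j) (x : ℝ) :
    b k x ≤ Bfun a b 𝒜 r j x := by
  rw [Bfun_eq a b 𝒜 r hj]; exact Finset.le_sup' (fun k => b k x) hk

lemma Afun_inv {j k : Fin N} (hj : j ∈ 𝒜) (h : EClo a b 𝒜 r j k) :
    Afun a b 𝒜 r j = Afun a b 𝒜 r k := by
  unfold Afun; rw [cls_eq_of a b 𝒜 r h]

lemma Bfun_inv {j k : Fin N} (hj : j ∈ 𝒜) (h : EClo a b 𝒜 r j k) :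
    Bfun a b 𝒜 r j = Bfun a b 𝒜 r k := by
  unfold Bfun; rw [cls_eq_of a b 𝒜 r h]

section WithHyps

variable {H1T : Prop}

lemma A_le_B (H1 : ∀ j ∈ 𝒜, ∀ x ∈ Ico (0:ℝ) r, -(2*u*x) ≤ a j x ∧ a j x ≤ b j x ∧ b j x ≤ 2*u*x) {j : Fin N} (hj : j ∈ 𝒜) {x : ℝ} (hx : x ∈ Ico (0:ℝ) r) :
    Afun a b 𝒜 r j x ≤ Bfun a b 𝒜 r j x :=
  (Afun_le a b 𝒜 r hj (self_mem_cls a b 𝒜 r hj) x).trans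
    (((H1 j hj x hx).2.1).trans (le_Bfun a b 𝒜 r hj (self_mem_cls a b 𝒜 r hj) x))

lemma A_lb (H1 : ∀ j ∈ 𝒜, ∀ x ∈ Ico (0:ℝ) r, -(2*u*x) ≤ a j x ∧ a j x ≤ b j x ∧ b j x ≤ 2*u*x) {j : Fin N} (hj : j ∈ 𝒜) {x : ℝ} (hx : x ∈ Ico (0:ℝ) r) :
    -(2*u*x) ≤ Afun a b 𝒜 r j x := by
  rw [Afun_eq a b 𝒜 r hj]
  exact Finset.le_inf' _ _ (fun k hk => (H1 k ((mem_cls a b 𝒜 r).1 hk).1 x hx).1)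

lemma B_ub (H1 : ∀ j ∈ 𝒜, ∀ x ∈ Ico (0:ℝ) r, -(2*u*x) ≤ a j x ∧ a j x ≤ b j x ∧ b j x ≤ 2*u*x) {j : Fin N} (hj : j ∈ 𝒜) {x : ℝ} (hx : x ∈ Ico (0:ℝ) r) :
    Bfun a b 𝒜 r j x ≤ 2*u*x := by
  rw [Bfun_eq a b 𝒜 r hj]
  exact Finset.sup'_le _ _ (fun k hk => (H1 k ((mem_cls a b 𝒜 r).1 hk).1 x hx).2.2)

/-- the chain lemma: the union of the pieces of one class has interval sections -/
lemma L_chain (H1 : ∀ j ∈ 𝒜, ∀ x ∈ Ico (0:ℝ) r, -(2*u*x) ≤ a j x ∧ a j x ≤ b j x ∧ b j x ≤ 2*u*x) {j k : Fin N} (hE : EClo a b 𝒜 r j k) (hj : j ∈ 𝒜) {x y : ℝ}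
    (hx : x ∈ Ico (0:ℝ) r) (h1 : a j x ≤ y) (h2 : y ≤ b k x) :
    ∃ l ∈ cls a b 𝒜 r j, a l x ≤ y ∧ y ≤ b l x := by
  induction hE with
  | refl => exact ⟨j, self_mem_cls a b 𝒜 r hj, h1, h2⟩
  | @tail k' k hE' hstep ih =>
      by_cases hyb : y ≤ b k' x
      · exact ih hyb
      · push_neg at hyb
        obtain ⟨hk', hk, hR⟩ := id hstep
        have hr := hR x hx
        refine ⟨k, (mem_cls a b 𝒜 r).2 ⟨hk, hE'.tail hstep⟩, ?_, h2⟩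
        have : a k x ≤ b k' x := le_trans (le_trans (le_max_right _ _) hr) (min_le_left _ _)
        linarith

lemma L_band (H1 : ∀ j ∈ 𝒜, ∀ x ∈ Ico (0:ℝ) r, -(2*u*x) ≤ a j x ∧ a j x ≤ b j x ∧ b j x ≤ 2*u*x) {j : Fin N} (hj : j ∈ 𝒜) {x y : ℝ} (hx : x ∈ Ico (0:ℝ) r)
    (h1 : Afun a b 𝒜 r j x ≤ y) (h2 : y ≤ Bfun a b 𝒜 r j x) :
    ∃ l ∈ cls a b 𝒜 r j, a l x ≤ y ∧ y ≤ b l x := by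
  obtain ⟨k0, hk0m, hk0⟩ := Finset.exists_mem_eq_inf' (cls_nonempty a b 𝒜 r hj) (fun k => a k x)
  obtain ⟨k1, hk1m, hk1⟩ := Finset.exists_mem_eq_sup' (cls_nonempty a b 𝒜 r hj) (fun k => b k x)
  rw [Afun_eq a b 𝒜 r hj, hk0] at h1
  rw [Bfun_eq a b 𝒜 r hj, hk1] at h2
  obtain ⟨hk0A, hk0E⟩ := (mem_cls a b 𝒜 r).1 hk0m
  obtain ⟨hk1A, hk1E⟩ := (mem_cls a b 𝒜 r).1 hk1m
  have hE : EClo a b 𝒜 r k0 k1 := (hk0E.symm' a b 𝒜 r).trans hk1E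
  obtain ⟨l, hl, hla, hlb⟩ := L_chain a b 𝒜 r u H1 hE hk0A hx h1 h2
  rw [← cls_eq_of a b 𝒜 r hk0E] at hl
  exact ⟨l, hl, hla, hlb⟩

lemma L_disj (H1 : ∀ j ∈ 𝒜, ∀ x ∈ Ico (0:ℝ) r, -(2*u*x) ≤ a j x ∧ a j x ≤ b j x ∧ b j x ≤ 2*u*x)
    (H2 : ∀ j ∈ 𝒜, ∀ k ∈ 𝒜,
      (∀ x ∈ Ioo (0:ℝ) r, ∀ y : ℝ, ¬(a j x ≤ y ∧ y ≤ b j x ∧ a k x ≤ y ∧ y ≤ b k x)) ∨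
      Rrel a b r j k) {j k : Fin N} (hj : j ∈ 𝒜) (hk : k ∈ 𝒜) (hne : ¬ EClo a b 𝒜 r j k) :
    ∀ x ∈ Ioo (0:ℝ) r, ∀ y : ℝ,
      ¬(Afun a b 𝒜 r j x ≤ y ∧ y ≤ Bfun a b 𝒜 r j x ∧
        Afun a b 𝒜 r k x ≤ y ∧ y ≤ Bfun a b 𝒜 r k x) := by
  rintro x hx y ⟨h1, h2, h3, h4⟩
  have hxI : x ∈ Ico (0:ℝ) r := ⟨hx.1.le, hx.2⟩
  obtain ⟨l, hl, hla, hlb⟩ := L_band a b 𝒜 r u H1 hj hxI h1 h2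
  obtain ⟨m, hm, hma, hmb⟩ := L_band a b 𝒜 r u H1 hk hxI h3 h4
  obtain ⟨hlA, hlE⟩ := (mem_cls a b 𝒜 r).1 hl
  obtain ⟨hmA, hmE⟩ := (mem_cls a b 𝒜 r).1 hm
  rcases H2 l hlA m hmA with hdisj | hR
  · exact hdisj x hx y ⟨hla, hlb, hma, hmb⟩
  · exact hne (hlE.trans ((Relation.ReflTransGen.single ⟨hlA, hmA, hR⟩).trans
      (hmE.symm' a b 𝒜 r)))

lemma A_cont (H3 : ∀ j ∈ 𝒜, ContinuousOn (a j) (Ico (0:ℝ) r) ∧ ContinuousOn (b j) (Ico (0:ℝ) r)) {j : Fin N} (hj : j ∈ 𝒜) : ContinuousOn (Afun a b 𝒜 r j) (Ico (0:ℝ) r) := by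
  have : ContinuousOn (fun x => (cls a b 𝒜 r j).inf' (cls_nonempty a b 𝒜 r hj)
      (fun k => a k x)) (Ico (0:ℝ) r) :=
    ContinuousOn.finset_inf'_apply _ (fun k hk => (H3 k ((mem_cls a b 𝒜 r).1 hk).1).1)
  exact this.congr (fun x _ => Afun_eq a b 𝒜 r hj x)

lemma B_cont (H3 : ∀ j ∈ 𝒜, ContinuousOn (a j) (Ico (0:ℝ) r) ∧ ContinuousOn (b j) (Ico (0:ℝ) r)) {j : Fin N} (hj : j ∈ 𝒜) : ContinuousOn (Bfun a b 𝒜 r j) (Ico (0:ℝ) r) := by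
  have : ContinuousOn (fun x => (cls a b 𝒜 r j).sup' (cls_nonempty a b 𝒜 r hj)
      (fun k => b k x)) (Ico (0:ℝ) r) :=
    ContinuousOn.finset_sup'_apply _ (fun k hk => (H3 k ((mem_cls a b 𝒜 r).1 hk).1).2)
  exact this.congr (fun x _ => Bfun_eq a b 𝒜 r hj x)

lemma L_order (H1 : ∀ j ∈ 𝒜, ∀ x ∈ Ico (0:ℝ) r, -(2*u*x) ≤ a j x ∧ a j x ≤ b j x ∧ b j x ≤ 2*u*x)
    (H2 : ∀ j ∈ 𝒜, ∀ k ∈ 𝒜,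
      (∀ x ∈ Ioo (0:ℝ) r, ∀ y : ℝ, ¬(a j x ≤ y ∧ y ≤ b j x ∧ a k x ≤ y ∧ y ≤ b k x)) ∨
      Rrel a b r j k)
    (H3 : ∀ j ∈ 𝒜, ContinuousOn (a j) (Ico (0:ℝ) r) ∧ ContinuousOn (b j) (Ico (0:ℝ) r))
    {j k : Fin N} (hj : j ∈ 𝒜) (hk : k ∈ 𝒜) (hne : ¬ EClo a b 𝒜 r j k) :
    (∀ x ∈ Ioo (0:ℝ) r, Bfun a b 𝒜 r j x < Afun a b 𝒜 r k x) ∨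
    (∀ x ∈ Ioo (0:ℝ) r, Bfun a b 𝒜 r k x < Afun a b 𝒜 r j x) := by
  set U := {x : ℝ | x ∈ Ioo (0:ℝ) r ∧ Bfun a b 𝒜 r j x < Afun a b 𝒜 r k x} with hU
  set V := {x : ℝ | x ∈ Ioo (0:ℝ) r ∧ Bfun a b 𝒜 r k x < Afun a b 𝒜 r j x} with hV
  have hIoo : Ioo (0:ℝ) r ⊆ Ico (0:ℝ) r := fun x hx => ⟨hx.1.le, hx.2⟩
  have hUo : IsOpen U := isOpen_lt_on
    ((B_cont a b 𝒜 r H3 hj).mono hIoo) ((A_cont a b 𝒜 r H3 hk).mono hIoo)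
  have hVo : IsOpen V := isOpen_lt_on
    ((B_cont a b 𝒜 r H3 hk).mono hIoo) ((A_cont a b 𝒜 r H3 hj).mono hIoo)
  have hcover : Ioo (0:ℝ) r ⊆ U ∪ V := by
    intro x hx
    by_contra hcon
    simp only [hU, hV, mem_union, mem_setOf_eq] at hcon
    push_neg at hcon
    have h1 : Afun a b 𝒜 r k x ≤ Bfun a b 𝒜 r j x := hcon.1 hx
    have h2 : Afun a b 𝒜 r j x ≤ Bfun a b 𝒜 r k x := hcon.2 hx
    set y := Max.max (Afun a b 𝒜 r j x) (Afun a b 𝒜 r k x) with hy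
    have hAB1 := A_le_B a b 𝒜 r u H1 hj (hIoo hx)
    have hAB2 := A_le_B a b 𝒜 r u H1 hk (hIoo hx)
    exact L_disj a b 𝒜 r u H1 H2 hj hk hne x hx y
      ⟨le_max_left _ _, max_le hAB1 h1, le_max_right _ _, max_le h2 hAB2⟩
  have hdisj : Ioo (0:ℝ) r ∩ (U ∩ V) = ∅ := by
    ext x
    simp only [hU, hV, mem_inter_iff, mem_setOf_eq, mem_empty_iff_false, iff_false]
    rintro ⟨hx, ⟨-, h1⟩, ⟨-, h2⟩⟩
    have hAB1 := A_le_B a b 𝒜 r u H1 hj (hIoo hx)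
    have hAB2 := A_le_B a b 𝒜 r u H1 hk (hIoo hx)
    linarith
  rcases isPreconnected_iff_subset_of_disjoint.1 isPreconnected_Ioo U V hUo hVo hcover hdisj with
    h | h
  · exact Or.inl (fun x hx => (h hx).2)
  · exact Or.inr (fun x hx => (h hx).2)

end WithHyps
end Machinery
-- ====== main lemma ======
section MainSec
open Set Filter Topology

attribute [local instance] Classical.propDecidable

/-- the band of one piece -/
def bandSet (a b : ℝ → ℝ) (r : ℝ) : Set E2 :=
  {p : E2 | p 0 ∈ Ico 0 r ∧ a (p 0) ≤ p 1 ∧ p 1 ≤ b (p 0)}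

/-- normalized data of an active piece -/
def PieceProps (S : Set E2) (r u : ℝ) (a b : ℝ → ℝ) : Prop :=
  S ∩ coneSet r (2*u) = bandSet a b r ∧
  (∀ x ∈ Ico (0:ℝ) r, a x ≤ b x) ∧
  ((∀ x, a x = -(2*u*x)) ∨ (IsDCROn a (Ico 0 r) ∧ HasDerivWithinAt a 0 (Ici 0) 0 ∧
      ∀ x ∈ Ico (0:ℝ) r, |a x| ≤ u/2 * x)) ∧
  ((∀ x, b x = 2*u*x) ∨ (IsDCROn b (Ico 0 r) ∧ HasDerivWithinAt b 0 (Ici 0) 0 ∧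
      ∀ x ∈ Ico (0:ℝ) r, |b x| ≤ u/2 * x)) ∧
  a 0 = 0 ∧ b 0 = 0 ∧ ContinuousOn a (Ico 0 r) ∧ ContinuousOn b (Ico 0 r) ∧
  (∀ x ∈ Ico (0:ℝ) r, -(2*u*x) ≤ a x ∧ b x ≤ 2*u*x)

lemma pieceProps_of_descH {S : Set E2} {r u : ℝ} (hr : 0 < r) (hu : 0 < u)
    (hd : DescH S r u) (hnot1 : ¬ (S ∩ coneSet r (2*u) = {(0:E2)})) (hnot2 : ¬ IsT2Set' S r u) :
    ∃ a b : ℝ → ℝ, PieceProps S r u a b := by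
  rcases hd with h | h | h | h | h
  · exact absurd h hnot1
  · exact absurd h hnot2
  · -- T3 : a = lower rim, b = U
    obtain ⟨U, hdcr, hder, hU0, hb, heq⟩ := h
    refine ⟨fun x => -(2*u*x), U, ?_, ?_, Or.inl (fun x => rfl), Or.inr ⟨hdcr, hder, hb⟩,
      by ring, hU0, (continuous_const.mul continuous_id).neg.continuousOn, hdcr.continuousOn,
      ?_⟩
    · -- set equality
      rw [heq]
      ext p
      simp only [mem_inter_iff, mem_hypOn, mem_coneSet, bandSet, mem_setOf_eq, mem_Ico]
      constructor
      · rintro ⟨⟨h1, h2⟩, h3, h4, h5, h6⟩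
        exact ⟨h1, by linarith, h2⟩
      · rintro ⟨⟨h1, h1'⟩, h2, h3⟩
        have hb' := hb (p 0) ⟨h1, h1'⟩
        have : p 1 ≤ p 0 * (2*u) := by
          have := (abs_le.1 hb').2
          nlinarith
        exact ⟨⟨⟨h1, h1'⟩, h3⟩, h1, h1', by linarith, this⟩
    · -- a ≤ b
      intro x hx
      have hb' := hb x hx
      have := (abs_le.1 hb').1
      show -(2*u*x) ≤ U x
      nlinarith [hx.1]
    · -- bounds
      intro x hx
      have hb' := hb x hx
      have := (abs_le.1 hb').2
      refine ⟨le_rfl, ?_⟩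
      show U x ≤ 2*u*x
      nlinarith [hx.1]
  · -- T4 : a = L, b = upper rim
    obtain ⟨L, hdcr, hder, hL0, hb, heq⟩ := h
    refine ⟨L, fun x => 2*u*x, ?_, ?_, Or.inr ⟨hdcr, hder, hb⟩, Or.inl (fun x => rfl),
      hL0, by ring, hdcr.continuousOn, (continuous_const.mul continuous_id).continuousOn,
      ?_⟩
    · rw [heq]
      ext p
      simp only [mem_inter_iff, mem_epiOn, mem_coneSet, bandSet, mem_setOf_eq, mem_Ico]
      constructor
      · rintro ⟨⟨h1, h2⟩, h3, h4, h5, h6⟩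
        exact ⟨h1, h2, by linarith⟩
      · rintro ⟨⟨h1, h1'⟩, h2, h3⟩
        have hb' := hb (p 0) ⟨h1, h1'⟩
        have hlow : -(p 0 * (2*u)) ≤ p 1 := by
          have := (abs_le.1 hb').1
          nlinarith
        exact ⟨⟨⟨h1, h1'⟩, h2⟩, h1, h1', hlow, by linarith⟩
    · intro x hx
      have hb' := hb x hx
      have := (abs_le.1 hb').2
      show L x ≤ 2*u*x
      nlinarith [hx.1]
    · intro x hx
      have hb' := hb x hx
      have := (abs_le.1 hb').1
      refine ⟨?_, le_rfl⟩
      show -(2*u*x) ≤ L x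
      nlinarith [hx.1]
  · -- T5
    obtain ⟨U, L, hdcrU, hdcrL, hderU, hderL, hU0, hL0, hbU, hbL, hLU, heq⟩ := h
    refine ⟨L, U, ?_, hLU, Or.inr ⟨hdcrL, hderL, hbL⟩, Or.inr ⟨hdcrU, hderU, hbU⟩,
      hL0, hU0, hdcrL.continuousOn, hdcrU.continuousOn, ?_⟩
    · rw [heq]
      ext p
      simp only [mem_inter_iff, mem_hypOn, mem_epiOn, bandSet, mem_setOf_eq]
      tauto
    · intro x hx
      have h1 := (abs_le.1 (hbL x hx)).1
      have h2 := (abs_le.1 (hbU x hx)).2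
      constructor
      · nlinarith [hx.1]
      · nlinarith [hx.1]


/-- derivation of the dichotomy from the pair description -/
lemma dichotomy_of_pair {S1 S2 : Set E2} {r u : ℝ} (hr : 0 < r) (hu : 0 < u)
    {a1 b1 a2 b2 : ℝ → ℝ}
    (h1 : PieceProps S1 r u a1 b1) (h2 : PieceProps S2 r u a2 b2)
    (hd : DescH (S1 ∩ S2) r u) (hnot2 : ¬ IsT2Set' (S1 ∩ S2) r u) :
    (∀ x ∈ Ioo (0:ℝ) r, ∀ y : ℝ, ¬(a1 x ≤ y ∧ y ≤ b1 x ∧ a2 x ≤ y ∧ y ≤ b2 x)) ∨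
    (∀ x ∈ Ico (0:ℝ) r, Max.max (a1 x) (a2 x) ≤ Min.min (b1 x) (b2 x)) := by
  obtain ⟨heq1, hab1, hlow1, hhigh1, ha01, hb01, hca1, hcb1, hbd1⟩ := h1
  obtain ⟨heq2, hab2, hlow2, hhigh2, ha02, hb02, hca2, hcb2, hbd2⟩ := h2
  have hkey : (S1 ∩ S2) ∩ coneSet r (2*u) = bandSet a1 b1 r ∩ bandSet a2 b2 r := by
    rw [← heq1, ← heq2]
    ext p; simp only [mem_inter_iff]; tauto
  have hmem_band : ∀ (a b : ℝ → ℝ) (x y : ℝ), x ∈ Ico (0:ℝ) r → a x ≤ y → y ≤ b x →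
      mk2 x y ∈ bandSet a b r := by
    intro a b x y hx hy1 hy2
    exact ⟨by simpa using hx, by simpa using hy1, by simpa using hy2⟩
  have hr2 : r/2 ∈ Ico (0:ℝ) r := ⟨by positivity, by linarith⟩
  rcases hd with h | h | h | h | h
  · -- T1
    left
    rintro x hx y ⟨hy1, hy2, hy3, hy4⟩
    have hxI : x ∈ Ico (0:ℝ) r := ⟨hx.1.le, hx.2⟩
    have hp : mk2 x y ∈ (S1 ∩ S2) ∩ coneSet r (2*u) := by
      rw [hkey]
      exact ⟨hmem_band a1 b1 x y hxI hy1 hy2, hmem_band a2 b2 x y hxI hy3 hy4⟩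
    rw [h] at hp
    have : (mk2 x y) 0 = 0 := by rw [show (mk2 x y) = 0 from hp]; rfl
    simp at this
    exact absurd this (ne_of_gt hx.1)
  · exact absurd h hnot2
  · -- T3
    obtain ⟨U, hdcr, hder, hU0, hb, heqU⟩ := h
    rcases hlow1 with rim1 | non1
    · rcases hlow2 with rim2 | non2
      · -- both lower rims
        right
        intro x hx
        have f1 := hab1 x hx
        have f2 := hab2 x hx
        rw [rim1 x] at f1
        rw [rim2 x] at f2
        rw [rim1 x, rim2 x, max_self]
        exact le_min f1 f2
      · -- piece 2 nonrim lower: contradiction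
        exfalso
        have hp : mk2 (r/2) (-(3/2*u*(r/2))) ∈ hypOn U r ∩ coneSet r (2*u) := by
          refine ⟨⟨by simpa using hr2, ?_⟩, by simpa using hr2.1, by simpa using hr2.2, ?_, ?_⟩
          · have := (abs_le.1 (hb (r/2) hr2)).1
            show -(3/2*u*(r/2)) ≤ U (r/2)
            nlinarith
          · show -((r/2) * (2*u)) ≤ -(3/2*u*(r/2)); nlinarith
          · show -(3/2*u*(r/2)) ≤ (r/2) * (2*u); nlinarith
        rw [← heqU, hkey] at hp
        have := hp.2.2.1
        simp only [mk2_c0, mk2_c1] at this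
        have hbnd := (abs_le.1 (non2.2.2 (r/2) hr2)).1
        nlinarith
    · -- piece 1 nonrim lower: contradiction
      exfalso
      have hp : mk2 (r/2) (-(3/2*u*(r/2))) ∈ hypOn U r ∩ coneSet r (2*u) := by
        refine ⟨⟨by simpa using hr2, ?_⟩, by simpa using hr2.1, by simpa using hr2.2, ?_, ?_⟩
        · have := (abs_le.1 (hb (r/2) hr2)).1
          show -(3/2*u*(r/2)) ≤ U (r/2)
          nlinarith
        · show -((r/2) * (2*u)) ≤ -(3/2*u*(r/2)); nlinarith
        · show -(3/2*u*(r/2)) ≤ (r/2) * (2*u); nlinarith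
      rw [← heqU, hkey] at hp
      have := hp.1.2.1
      simp only [mk2_c0, mk2_c1] at this
      have hbnd := (abs_le.1 (non1.2.2 (r/2) hr2)).1
      nlinarith
  · -- T4
    obtain ⟨L, hdcr, hder, hL0, hb, heqL⟩ := h
    rcases hhigh1 with rim1 | non1
    · rcases hhigh2 with rim2 | non2
      · right
        intro x hx
        rw [rim1 x, rim2 x, min_self]
        have e1 := (hbd1 x hx).1
        have e2 := (hbd2 x hx).1
        have f1 := hab1 x hx
        have f2 := hab2 x hx
        rw [rim1 x] at f1
        rw [rim2 x] at f2
        exact max_le f1 f2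
      · exfalso
        have hp : mk2 (r/2) (3/2*u*(r/2)) ∈ epiOn L r ∩ coneSet r (2*u) := by
          refine ⟨⟨by simpa using hr2, ?_⟩, by simpa using hr2.1, by simpa using hr2.2, ?_, ?_⟩
          · have := (abs_le.1 (hb (r/2) hr2)).2
            show L (r/2) ≤ 3/2*u*(r/2)
            nlinarith
          · show -((r/2) * (2*u)) ≤ 3/2*u*(r/2); nlinarith
          · show (3/2*u*(r/2)) ≤ (r/2) * (2*u); nlinarith
        rw [← heqL, hkey] at hp
        have := hp.2.2.2
        simp only [mk2_c0, mk2_c1] at this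
        have hbnd := (abs_le.1 (non2.2.2 (r/2) hr2)).2
        nlinarith
    · exfalso
      have hp : mk2 (r/2) (3/2*u*(r/2)) ∈ epiOn L r ∩ coneSet r (2*u) := by
        refine ⟨⟨by simpa using hr2, ?_⟩, by simpa using hr2.1, by simpa using hr2.2, ?_, ?_⟩
        · have := (abs_le.1 (hb (r/2) hr2)).2
          show L (r/2) ≤ 3/2*u*(r/2)
          nlinarith
        · show -((r/2) * (2*u)) ≤ 3/2*u*(r/2); nlinarith
        · show (3/2*u*(r/2)) ≤ (r/2) * (2*u); nlinarith
      rw [← heqL, hkey] at hp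
      have := hp.1.2.2
      simp only [mk2_c0, mk2_c1] at this
      have hbnd := (abs_le.1 (non1.2.2 (r/2) hr2)).2
      nlinarith
  · -- T5
    obtain ⟨U, L, hdcrU, hdcrL, hderU, hderL, hU0, hL0, hbU, hbL, hLU, heqT⟩ := h
    right
    intro x hx
    have hp : mk2 x (L x) ∈ hypOn U r ∩ epiOn L r := by
      exact ⟨⟨by simpa using hx, by simpa using hLU x hx⟩, ⟨by simpa using hx, by simp⟩⟩
    rw [← heqT, hkey] at hp
    obtain ⟨hp1, hp2⟩ := hp
    have e1 := hp1.2.1; have e2 := hp1.2.2; have e3 := hp2.2.1; have e4 := hp2.2.2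
    simp only [mk2_c0, mk2_c1] at e1 e2 e3 e4
    exact le_trans (max_le e1 e3) (le_min e2 e4)


set_option maxHeartbeats 4000000 in
lemma main_lemma (F : Set E2) (hFc : IsClosed F) {r u : ℝ} (hr : 0 < r) (hu : 0 < u)
    {N : ℕ} (Nj : Fin N → Set E2) (hun : F = ⋃ j, Nj j) (hN : 0 < N)
    (h0 : ∀ j, (0:E2) ∈ Nj j)
    (hD : ∀ I : Finset (Fin N), I.Nonempty → DescH (⋂ j ∈ I, Nj j) r u) :
    (∃ r' u' : ℝ, 0 < r' ∧ 0 < u' ∧ IsT1Set F r' u') ∨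
    (∃ r' u' : ℝ, 0 < r' ∧ 0 < u' ∧ IsT2Set F r' u') ∨
    (∃ r' u' : ℝ, 0 < r' ∧ 0 < u' ∧ IsTT3Set F r' u') := by
  classical
  by_cases hT2 : coneSet r (2*u) ⊆ F
  · exact Or.inr (Or.inl ⟨r, u, hr, hu, hT2⟩)
  have hsubF : ∀ j, Nj j ⊆ F := fun j => by rw [hun]; exact subset_iUnion Nj j
  have hsing : ∀ j : Fin N, DescH (Nj j) r u := by
    intro j
    have := hD {j} (Finset.singleton_nonempty j)
    simpa using this
  set 𝒜 : Finset (Fin N) :=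
    Finset.univ.filter (fun j => ¬(Nj j ∩ coneSet r (2*u) = {(0:E2)})) with h𝒜
  have hT1' : ∀ j, j ∉ 𝒜 → Nj j ∩ coneSet r (2*u) = {(0:E2)} := by
    intro j hj
    rw [h𝒜] at hj
    simp only [Finset.mem_filter, Finset.mem_univ, true_and, not_not] at hj
    exact hj
  have hdata : ∀ j : Fin N, ∃ a b : ℝ → ℝ, j ∈ 𝒜 → PieceProps (Nj j) r u a b := by
    intro j
    by_cases hj : j ∈ 𝒜
    · have hnot1 : ¬(Nj j ∩ coneSet r (2*u) = {(0:E2)}) := by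
        rw [h𝒜] at hj
        simpa using hj
      have hnot2 : ¬IsT2Set' (Nj j) r u := fun hc => hT2 (hc.trans (hsubF j))
      obtain ⟨a, b, hab⟩ := pieceProps_of_descH hr hu (hsing j) hnot1 hnot2
      exact ⟨a, b, fun _ => hab⟩
    · exact ⟨0, 0, fun h => absurd h hj⟩
  choose af bf hPP using hdata
  -- trivial case: no active pieces
  by_cases hAne : 𝒜.Nonempty
  swap
  · left
    refine ⟨r, u, hr, hu, ?_⟩
    show F ∩ coneSet r (2*u) = {0}
    apply Subset.antisymm
    · rintro p ⟨hpF, hpc⟩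
      rw [hun] at hpF
      obtain ⟨_, ⟨j, rfl⟩, hpj⟩ := hpF
      have hj : j ∉ 𝒜 := fun hc => hAne ⟨j, hc⟩
      have := hT1' j hj
      rw [← this]
      exact ⟨hpj, hpc⟩
    · rintro p rfl
      obtain ⟨j⟩ : Nonempty (Fin N) := ⟨⟨0, hN⟩⟩
      exact ⟨hsubF j (h0 j), zero_mem_coneSet hr⟩
  obtain ⟨j0, hj0⟩ := hAne
  have hPPm : ∀ j ∈ 𝒜, PieceProps (Nj j) r u (af j) (bf j) := fun j hj => hPP j hj
  -- main hypotheses for the machinery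
  have H1 : ∀ j ∈ 𝒜, ∀ x ∈ Ico (0:ℝ) r,
      -(2*u*x) ≤ af j x ∧ af j x ≤ bf j x ∧ bf j x ≤ 2*u*x := by
    intro j hj x hx
    obtain ⟨-, hab, -, -, -, -, -, -, hbd⟩ := hPPm j hj
    exact ⟨(hbd x hx).1, hab x hx, (hbd x hx).2⟩
  have H3 : ∀ j ∈ 𝒜, ContinuousOn (af j) (Ico (0:ℝ) r) ∧
      ContinuousOn (bf j) (Ico (0:ℝ) r) := by
    intro j hj
    obtain ⟨-, -, -, -, -, -, hca, hcb, -⟩ := hPPm j hj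
    exact ⟨hca, hcb⟩
  have H4 : ∀ j ∈ 𝒜, af j 0 = 0 ∧ bf j 0 = 0 := by
    intro j hj
    obtain ⟨-, -, -, -, ha0, hb0, -, -, -⟩ := hPPm j hj
    exact ⟨ha0, hb0⟩
  have H2 : ∀ j ∈ 𝒜, ∀ k ∈ 𝒜,
      (∀ x ∈ Ioo (0:ℝ) r, ∀ y : ℝ,
        ¬(af j x ≤ y ∧ y ≤ bf j x ∧ af k x ≤ y ∧ y ≤ bf k x)) ∨
      Rrel af bf r j k := by
    intro j hj k hk
    have hpair : DescH (Nj j ∩ Nj k) r u := by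
      have h := hD {j, k} ⟨j, by simp⟩
      have heq : (⋂ l ∈ ({j, k} : Finset (Fin N)), Nj l) = Nj j ∩ Nj k := by
        simp
      rwa [heq] at h
    have hnot2 : ¬IsT2Set' (Nj j ∩ Nj k) r u := fun hc =>
      hT2 ((hc.trans inter_subset_left).trans (hsubF j))
    exact dichotomy_of_pair hr hu (hPPm j hj) (hPPm k hk) hpair hnot2
  -- ===== stage 2: classes enumeration =====
  set AF := Afun af bf 𝒜 r with hAF
  set BF := Bfun af bf 𝒜 r with hBF
  have hr2 : r/2 ∈ Ico (0:ℝ) r := ⟨by positivity, by linarith⟩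
  have hr2' : r/2 ∈ Ioo (0:ℝ) r := ⟨by positivity, by linarith⟩
  have EQK : ∀ j ∈ 𝒜, ∀ k ∈ 𝒜, (AF j (r/2) = AF k (r/2) ↔ EClo af bf 𝒜 r j k) := by
    intro j hj k hk
    constructor
    · intro hkey
      by_contra hne
      refine L_disj af bf 𝒜 r u H1 H2 hj hk hne (r/2) hr2' (AF j (r/2)) ⟨le_rfl, ?_, ?_, ?_⟩
      · exact A_le_B af bf 𝒜 r u H1 hj hr2
      · rw [hkey]
      · rw [hkey]; exact A_le_B af bf 𝒜 r u H1 hk hr2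
    · intro hE
      rw [hAF, Afun_inv af bf 𝒜 r hj hE]
  set keys := 𝒜.image (fun j => AF j (r/2)) with hkeys
  set ks := keys.sort (·≤·) with hks
  set m := ks.length with hmdef
  have hm0 : 0 < m := by
    rw [hmdef, hks, Finset.length_sort]
    exact Finset.card_pos.2 ⟨AF j0 (r/2), Finset.mem_image_of_mem _ hj0⟩
  have hrep : ∀ t : ℝ, ∃ j : Fin N, t ∈ keys → j ∈ 𝒜 ∧ AF j (r/2) = t := by
    intro t
    by_cases ht : t ∈ keys
    · obtain ⟨j, hj, hjt⟩ := Finset.mem_image.1 ht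
      exact ⟨j, fun _ => ⟨hj, hjt⟩⟩
    · exact ⟨j0, fun h => absurd h ht⟩
  choose repf hrepf using hrep
  set jc : ℕ → Fin N := fun c => repf (ks.getD c 0) with hjcdef
  have hget : ∀ c, c < m → ks.getD c 0 ∈ keys := by
    intro c hc
    rw [List.getD_eq_get (l := ks) (d := (0:ℝ)) (i := ⟨c, hc⟩)]
    exact (Finset.mem_sort _).1 (List.get_mem ks ⟨c, hc⟩)
  have hjc : ∀ c, c < m → jc c ∈ 𝒜 ∧ AF (jc c) (r/2) = ks.getD c 0 :=
    fun c hc => hrepf _ (hget c hc)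
  have hsorted : ∀ c c', c < c' → c' < m → ks.getD c 0 < ks.getD c' 0 := by
    intro c c' hcc hc'
    have hc : c < m := lt_trans hcc hc'
    rw [List.getD_eq_get (l := ks) (d := (0:ℝ)) (i := ⟨c, hc⟩), List.getD_eq_get (l := ks) (d := (0:ℝ)) (i := ⟨c', hc'⟩)]
    have hs : ks.SortedLT := by rw [hks]; exact Finset.sortedLT_sort keys
    exact hs (show (⟨c,hc⟩ : Fin ks.length) < ⟨c',hc'⟩ from hcc)
  have ordc : ∀ c c', c < c' → c' < m → ∀ x ∈ Ioo (0:ℝ) r, BF (jc c) x < AF (jc c') x := by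
    intro c c' hcc hc' x hx
    have hc := lt_trans hcc hc'
    have hA := hjc c hc
    have hA' := hjc c' hc'
    have hne : ¬ EClo af bf 𝒜 r (jc c) (jc c') := by
      intro hE
      have hq := (EQK _ hA.1 _ hA'.1).1
      have : AF (jc c) (r/2) ≠ AF (jc c') (r/2) := by
        rw [hA.2, hA'.2]
        exact ne_of_lt (hsorted c c' hcc hc')
      exact this ((EQK _ hA.1 _ hA'.1).2 hE)
    rcases L_order af bf 𝒜 r u H1 H2 H3 hA.1 hA'.1 hne with h | h
    · exact h x hx
    · exfalso
      have h1 := h (r/2) hr2'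
      have h2 := A_le_B af bf 𝒜 r u H1 hA'.1 hr2
      have h3 := hsorted c c' hcc hc'
      rw [← hA.2, ← hA'.2] at h3
      linarith
  -- class flags and normalized descriptions of class envelopes
  set lowC : ℕ → Prop := fun c => ∃ k ∈ cls af bf 𝒜 r (jc c), ∀ x, af k x = -(2*u*x)
    with hlowCdef
  set highC : ℕ → Prop := fun c => ∃ k ∈ cls af bf 𝒜 r (jc c), ∀ x, bf k x = 2*u*x
    with hhighCdef
  have ZER : ∀ j ∈ 𝒜, AF j 0 = 0 ∧ BF j 0 = 0 := by
    intro j hj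
    constructor
    · obtain ⟨k, hk, hkeq⟩ := Finset.exists_mem_eq_inf' (cls_nonempty af bf 𝒜 r hj)
        (fun k => af k 0)
      rw [hAF, Afun_eq af bf 𝒜 r hj, hkeq]
      exact (H4 k ((mem_cls af bf 𝒜 r).1 hk).1).1
    · obtain ⟨k, hk, hkeq⟩ := Finset.exists_mem_eq_sup' (cls_nonempty af bf 𝒜 r hj)
        (fun k => bf k 0)
      rw [hBF, Bfun_eq af bf 𝒜 r hj, hkeq]
      exact (H4 k ((mem_cls af bf 𝒜 r).1 hk).1).2
  have AX1 : ∀ c, c < m → lowC c → ∀ x ∈ Ico (0:ℝ) r, AF (jc c) x = -(2*u*x) := by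
    intro c hc hlc x hx
    obtain ⟨k, hk, hkrim⟩ := hlc
    apply le_antisymm
    · have := Afun_le af bf 𝒜 r (hjc c hc).1 hk x
      rwa [hkrim x] at this
    · exact A_lb af bf 𝒜 r u H1 (hjc c hc).1 hx
  have BX1 : ∀ c, c < m → highC c → ∀ x ∈ Ico (0:ℝ) r, BF (jc c) x = 2*u*x := by
    intro c hc hlc x hx
    obtain ⟨k, hk, hkrim⟩ := hlc
    apply le_antisymm
    · exact B_ub af bf 𝒜 r u H1 (hjc c hc).1 hx
    · have := le_Bfun af bf 𝒜 r (hjc c hc).1 hk x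
      rwa [hkrim x] at this
  have AX2 : ∀ c, c < m → ¬ lowC c → IsDCROn (AF (jc c)) (Ico 0 r) ∧
      HasDerivWithinAt (AF (jc c)) 0 (Ici 0) 0 ∧
      (∀ x ∈ Ico (0:ℝ) r, |AF (jc c) x| ≤ u/2 * x) := by
    intro c hc hlc
    have hjcm := (hjc c hc).1
    have hmem : ∀ k ∈ cls af bf 𝒜 r (jc c), IsDCROn (af k) (Ico 0 r) ∧
        HasDerivWithinAt (af k) 0 (Ici 0) 0 ∧ (∀ x ∈ Ico (0:ℝ) r, |af k x| ≤ u/2 * x) := by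
      intro k hk
      obtain ⟨-, -, hdisj, -, -, -, -, -, -⟩ := hPPm k ((mem_cls af bf 𝒜 r).1 hk).1
      rcases hdisj with hrim | hgood
      · exact absurd ⟨k, hk, hrim⟩ hlc
      · exact hgood
    have hfun : AF (jc c) = fun x => (cls af bf 𝒜 r (jc c)).inf'
        (cls_nonempty af bf 𝒜 r hjcm) (fun k => af k x) := by
      funext x
      rw [hAF, Afun_eq af bf 𝒜 r hjcm]
    refine ⟨?_, ?_, ?_⟩
    · rw [hfun]
      exact isDCROn_inf' _ (fun k hk => (hmem k hk).1)
    · apply hasDeriv_zero_of_selection hr (fun k hk => (hmem k hk).2.1)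
        (fun k hk => (H4 k ((mem_cls af bf 𝒜 r).1 hk).1).1) (ZER _ hjcm).1
      intro x hx
      obtain ⟨k, hk, hkeq⟩ := Finset.exists_mem_eq_inf' (cls_nonempty af bf 𝒜 r hjcm)
        (fun k => af k x)
      refine ⟨k, hk, ?_⟩
      rw [hAF, Afun_eq af bf 𝒜 r hjcm, hkeq]
    · intro x hx
      obtain ⟨k, hk, hkeq⟩ := Finset.exists_mem_eq_inf' (cls_nonempty af bf 𝒜 r hjcm)
        (fun k => af k x)
      rw [hAF, Afun_eq af bf 𝒜 r hjcm, hkeq]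
      exact (hmem k hk).2.2 x hx
  have BX2 : ∀ c, c < m → ¬ highC c → IsDCROn (BF (jc c)) (Ico 0 r) ∧
      HasDerivWithinAt (BF (jc c)) 0 (Ici 0) 0 ∧
      (∀ x ∈ Ico (0:ℝ) r, |BF (jc c) x| ≤ u/2 * x) := by
    intro c hc hlc
    have hjcm := (hjc c hc).1
    have hmem : ∀ k ∈ cls af bf 𝒜 r (jc c), IsDCROn (bf k) (Ico 0 r) ∧
        HasDerivWithinAt (bf k) 0 (Ici 0) 0 ∧ (∀ x ∈ Ico (0:ℝ) r, |bf k x| ≤ u/2 * x) := by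
      intro k hk
      obtain ⟨-, -, -, hdisj, -, -, -, -, -⟩ := hPPm k ((mem_cls af bf 𝒜 r).1 hk).1
      rcases hdisj with hrim | hgood
      · exact absurd ⟨k, hk, hrim⟩ hlc
      · exact hgood
    have hfun : BF (jc c) = fun x => (cls af bf 𝒜 r (jc c)).sup'
        (cls_nonempty af bf 𝒜 r hjcm) (fun k => bf k x) := by
      funext x
      rw [hBF, Bfun_eq af bf 𝒜 r hjcm]
    refine ⟨?_, ?_, ?_⟩
    · rw [hfun]
      exact isDCROn_sup' _ (fun k hk => (hmem k hk).1)
    · apply hasDeriv_zero_of_selection hr (fun k hk => (hmem k hk).2.1)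
        (fun k hk => (H4 k ((mem_cls af bf 𝒜 r).1 hk).1).2) (ZER _ hjcm).2
      intro x hx
      obtain ⟨k, hk, hkeq⟩ := Finset.exists_mem_eq_sup' (cls_nonempty af bf 𝒜 r hjcm)
        (fun k => bf k x)
      refine ⟨k, hk, ?_⟩
      rw [hBF, Bfun_eq af bf 𝒜 r hjcm, hkeq]
    · intro x hx
      obtain ⟨k, hk, hkeq⟩ := Finset.exists_mem_eq_sup' (cls_nonempty af bf 𝒜 r hjcm)
        (fun k => bf k x)
      rw [hBF, Bfun_eq af bf 𝒜 r hjcm, hkeq]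
      exact (hmem k hk).2.2 x hx
  -- bands
  set Band : ℕ → Set E2 := fun c =>
    {p : E2 | p 0 ∈ Ico 0 r ∧ AF (jc c) (p 0) ≤ p 1 ∧ p 1 ≤ BF (jc c) (p 0)} with hBandDef
  have hband_to_F : ∀ c, c < m → Band c ⊆ F := by
    intro c hc p hp
    obtain ⟨hp0, hp1, hp2⟩ := hp
    obtain ⟨l, hl, hla, hlb⟩ := L_band af bf 𝒜 r u H1 (hjc c hc).1 hp0 hp1 hp2
    have hl𝒜 := ((mem_cls af bf 𝒜 r).1 hl).1
    have : p ∈ bandSet (af l) (bf l) r := ⟨hp0, hla, hlb⟩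
    rw [← (hPPm l hl𝒜).1] at this
    exact hsubF l this.1
  have hband_cone : ∀ c, c < m → Band c ⊆ coneSet r (2*u) := by
    intro c hc p hp
    obtain ⟨hp0, hp1, hp2⟩ := hp
    have hlb := A_lb af bf 𝒜 r u H1 (hjc c hc).1 hp0
    have hub := B_ub af bf 𝒜 r u H1 (hjc c hc).1 hp0
    exact ⟨hp0.1, hp0.2, by rw [mul_comm]; linarith, by rw [mul_comm]; linarith⟩
  have DECOMP : F ∩ coneSet r (2*u) = ⋃ c ∈ Finset.range m, Band c := by
    apply Subset.antisymm
    · rintro p ⟨hpF, hpc⟩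
      rw [hun] at hpF
      obtain ⟨_, ⟨j, rfl⟩, hpj⟩ := hpF
      by_cases hj : j ∈ 𝒜
      · -- find the class index of j
        have hkmem : AF j (r/2) ∈ ks := by
          rw [hks]
          exact (Finset.mem_sort _).2 (Finset.mem_image_of_mem _ hj)
        obtain ⟨idx, hidx⟩ := List.mem_iff_get.1 hkmem
        have hcm : (idx : ℕ) < m := idx.2
        have hkey : AF (jc idx) (r/2) = AF j (r/2) := by
          rw [(hjc idx hcm).2, List.getD_eq_get (l := ks) (d := (0:ℝ)) (i := idx)]
          · rw [← hidx]
        have hE : EClo af bf 𝒜 r (jc idx) j := (EQK _ (hjc idx hcm).1 _ hj).1 hkey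
        have hp : p ∈ bandSet (af j) (bf j) r := by
          rw [← (hPPm j hj).1]
          exact ⟨hpj, hpc⟩
        refine mem_biUnion (Finset.mem_range.2 hcm) ?_
        refine ⟨hp.1, ?_, ?_⟩
        · calc AF (jc idx) (p 0) = AF j (p 0) := by
                rw [hAF, Afun_inv af bf 𝒜 r (hjc idx hcm).1 hE]
            _ ≤ af j (p 0) := Afun_le af bf 𝒜 r hj (self_mem_cls af bf 𝒜 r hj) _
            _ ≤ p 1 := hp.2.1
        · calc p 1 ≤ bf j (p 0) := hp.2.2
            _ ≤ BF j (p 0) := le_Bfun af bf 𝒜 r hj (self_mem_cls af bf 𝒜 r hj) _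
            _ = BF (jc idx) (p 0) := by
                rw [hBF, Bfun_inv af bf 𝒜 r (hjc idx hcm).1 hE]
      · -- p = 0
        have h01 := hT1' j hj
        have : p ∈ ({(0:E2)} : Set E2) := by rw [← h01]; exact ⟨hpj, hpc⟩
        rw [mem_singleton_iff] at this
        subst this
        refine mem_biUnion (Finset.mem_range.2 hm0) ?_
        refine ⟨by constructor <;> simp [hr], ?_, ?_⟩
        · rw [zero_c0, zero_c1, (ZER _ (hjc 0 hm0).1).1]
        · rw [zero_c0, zero_c1, (ZER _ (hjc 0 hm0).1).2]
    · intro p hp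
      rw [mem_iUnion₂] at hp
      obtain ⟨c, hcm, hpc⟩ := hp
      exact ⟨hband_to_F c (Finset.mem_range.1 hcm) hpc,
        hband_cone c (Finset.mem_range.1 hcm) hpc⟩
  have P4 : ∀ c, c < m → ¬(lowC c ∧ highC c) := by
    rintro c hc ⟨hl, hh⟩
    apply hT2
    intro p hp
    have hp0 : p 0 ∈ Ico (0:ℝ) r := ⟨hp.1, hp.2.1⟩
    apply hband_to_F c hc
    refine ⟨hp0, ?_, ?_⟩
    · rw [AX1 c hc hl _ hp0]
      have := hp.2.2.1
      rw [mul_comm] at this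
      linarith
    · rw [BX1 c hc hh _ hp0]
      have := hp.2.2.2
      rw [mul_comm] at this
      linarith
  -- ===== stage 3: gaps and frontier lemmas =====
  have hABc : ∀ c, c < m → ∀ x ∈ Ico (0:ℝ) r, AF (jc c) x ≤ BF (jc c) x :=
    fun c hc x hx => A_le_B af bf 𝒜 r u H1 (hjc c hc).1 hx
  have NB : ∀ x ∈ Ioo (0:ℝ) r, ∀ c, c < m → ∀ ε > 0, ∃ δ : ℝ, 0 < δ ∧ δ < ε ∧
      ∀ c', c' < m → ¬(AF (jc c') x ≤ AF (jc c) x - δ ∧ AF (jc c) x - δ ≤ BF (jc c') x) := by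
    intro x hx c hc ε hε
    have hxI : x ∈ Ico (0:ℝ) r := ⟨hx.1.le, hx.2⟩
    set T := (Finset.range m).filter (fun c' => BF (jc c') x < AF (jc c) x) with hT
    have key : ∀ δ : ℝ, 0 < δ → (∀ c' ∈ T, δ < AF (jc c) x - BF (jc c') x) →
        ∀ c', c' < m → ¬(AF (jc c') x ≤ AF (jc c) x - δ ∧ AF (jc c) x - δ ≤ BF (jc c') x) := by
      rintro δ hδ hgap c' hc' ⟨hcon1, hcon2⟩
      by_cases hmem : c' ∈ T
      · have := hgap c' hmem
        linarith
      · have hge : AF (jc c) x ≤ BF (jc c') x := by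
          by_contra hlt
          push_neg at hlt
          exact hmem (Finset.mem_filter.2 ⟨Finset.mem_range.2 hc', hlt⟩)
        rcases lt_trichotomy c c' with hlt | heq | hgt
        · have ho := ordc c c' hlt hc' x hx
          have hA := hABc c hc x hxI
          linarith
        · subst heq; linarith
        · have ho := ordc c' c hgt hc x hx
          linarith
    by_cases hTne : T.Nonempty
    · set g := T.inf' hTne (fun c' => AF (jc c) x - BF (jc c') x) with hg
      have hgpos : 0 < g := by
        rw [hg, Finset.lt_inf'_iff]
        intro c' hc'
        have := (Finset.mem_filter.1 hc').2
        linarith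
      refine ⟨Min.min (ε/2) (g/2), lt_min (by linarith) (by linarith),
        lt_of_le_of_lt (min_le_left _ _) (by linarith), key _ (lt_min (by linarith) (by linarith)) ?_⟩
      intro c' hc'
      have hineq : g ≤ AF (jc c) x - BF (jc c') x := by
        rw [hg]; exact Finset.inf'_le _ hc'
      have : Min.min (ε/2) (g/2) ≤ g/2 := min_le_right _ _
      linarith
    · refine ⟨ε/2, by linarith, by linarith, key _ (by linarith) ?_⟩
      intro c' hc'
      exact absurd ⟨c', hc'⟩ hTne
  have NA : ∀ x ∈ Ioo (0:ℝ) r, ∀ c, c < m → ∀ ε > 0, ∃ δ : ℝ, 0 < δ ∧ δ < ε ∧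
      ∀ c', c' < m → ¬(AF (jc c') x ≤ BF (jc c) x + δ ∧ BF (jc c) x + δ ≤ BF (jc c') x) := by
    intro x hx c hc ε hε
    have hxI : x ∈ Ico (0:ℝ) r := ⟨hx.1.le, hx.2⟩
    set T := (Finset.range m).filter (fun c' => BF (jc c) x < AF (jc c') x) with hT
    have key : ∀ δ : ℝ, 0 < δ → (∀ c' ∈ T, δ < AF (jc c') x - BF (jc c) x) →
        ∀ c', c' < m → ¬(AF (jc c') x ≤ BF (jc c) x + δ ∧ BF (jc c) x + δ ≤ BF (jc c') x) := by
      rintro δ hδ hgap c' hc' ⟨hcon1, hcon2⟩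
      by_cases hmem : c' ∈ T
      · have := hgap c' hmem
        linarith
      · have hge : AF (jc c') x ≤ BF (jc c) x := by
          by_contra hlt
          push_neg at hlt
          exact hmem (Finset.mem_filter.2 ⟨Finset.mem_range.2 hc', hlt⟩)
        rcases lt_trichotomy c c' with hlt | heq | hgt
        · have ho := ordc c c' hlt hc' x hx
          exact absurd (Finset.mem_filter.2 ⟨Finset.mem_range.2 hc', ho⟩) hmem
        · subst heq; linarith
        · have ho := ordc c' c hgt hc x hx
          have hA := hABc c hc x hxI
          have hA' := hABc c' hc' x hxI
          linarith
    by_cases hTne : T.Nonempty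
    · set g := T.inf' hTne (fun c' => AF (jc c') x - BF (jc c) x) with hg
      have hgpos : 0 < g := by
        rw [hg, Finset.lt_inf'_iff]
        intro c' hc'
        have := (Finset.mem_filter.1 hc').2
        linarith
      refine ⟨Min.min (ε/2) (g/2), lt_min (by linarith) (by linarith),
        lt_of_le_of_lt (min_le_left _ _) (by linarith), key _ (lt_min (by linarith) (by linarith)) ?_⟩
      intro c' hc'
      have hineq : g ≤ AF (jc c') x - BF (jc c) x := by
        rw [hg]; exact Finset.inf'_le _ hc'
      have : Min.min (ε/2) (g/2) ≤ g/2 := min_le_right _ _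
      linarith
    · refine ⟨ε/2, by linarith, by linarith, key _ (by linarith) ?_⟩
      intro c' hc'
      exact absurd ⟨c', hc'⟩ hTne
  have FrIn : ∀ p : E2, p ∈ F → (∀ ε : ℝ, 0 < ε → ∃ q : E2, q ∉ F ∧ dist p q < ε) →
      p ∈ frontier F := by
    intro p hpF hseq
    rw [hFc.frontier_eq]
    refine ⟨hpF, ?_⟩
    intro hint
    rw [mem_interior_iff_mem_nhds, Metric.mem_nhds_iff] at hint
    obtain ⟨ε, hε, hball⟩ := hint
    obtain ⟨q, hqF, hqd⟩ := hseq ε hε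
    exact hqF (hball (by rwa [Metric.mem_ball, dist_comm]))
  have hnotF : ∀ q : E2, q ∈ coneSet r (2*u) →
      (∀ c, c < m → ¬(AF (jc c) (q 0) ≤ q 1 ∧ q 1 ≤ BF (jc c) (q 0))) → q ∉ F := by
    intro q hqc hnot hqF
    have hq : q ∈ ⋃ c ∈ Finset.range m, Band c := by rw [← DECOMP]; exact ⟨hqF, hqc⟩
    rw [mem_iUnion₂] at hq
    obtain ⟨c, hcm, hcb⟩ := hq
    exact hnot c (Finset.mem_range.1 hcm) ⟨hcb.2.1, hcb.2.2⟩
  have Fr2 : ∀ c, c < m → ∀ p : E2, p 0 ∈ Ioo (0:ℝ) r → AF (jc c) (p 0) < p 1 →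
      p 1 < BF (jc c) (p 0) → p ∈ interior F := by
    intro c hc p hp0 hA hB
    rw [mem_interior_iff_mem_nhds]
    have hIoo_mem : Ico (0:ℝ) r ∈ nhds (p 0) :=
      mem_nhds_iff.2 ⟨Ioo 0 r, fun y hy => ⟨hy.1.le, hy.2⟩, isOpen_Ioo, hp0⟩
    have hc0 : ContinuousAt (fun q : E2 => q 0) p := cont_c0.continuousAt
    have hcA : ContinuousAt (fun q : E2 => AF (jc c) (q 0)) p :=
      ContinuousAt.comp (x := p) (g := AF (jc c)) (f := fun q : E2 => q 0)
        ((A_cont af bf 𝒜 r H3 (hjc c hc).1).continuousAt hIoo_mem) hc0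
    have hcB : ContinuousAt (fun q : E2 => BF (jc c) (q 0)) p :=
      ContinuousAt.comp (x := p) (g := BF (jc c)) (f := fun q : E2 => q 0)
        ((B_cont af bf 𝒜 r H3 (hjc c hc).1).continuousAt hIoo_mem) hc0
    have h1 : ∀ᶠ q : E2 in nhds p, AF (jc c) (q 0) < q 1 :=
      hcA.eventually_lt cont_c1.continuousAt hA
    have h2 : ∀ᶠ q : E2 in nhds p, q 1 < BF (jc c) (q 0) :=
      cont_c1.continuousAt.eventually_lt hcB hB
    have h3 : ∀ᶠ q : E2 in nhds p, q 0 ∈ Ioo (0:ℝ) r :=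
      (isOpen_Ioo.preimage cont_c0).eventually_mem hp0
    filter_upwards [h1, h2, h3] with q hq1 hq2 hq3
    exact hband_to_F c hc ⟨⟨hq3.1.le, hq3.2⟩, hq1.le, hq2.le⟩
  have distv : ∀ (x y y' : ℝ), dist (mk2 x y) (mk2 x y') = |y - y'| := by
    intro x y y'
    rw [dist_mk2]
    simp [Real.sqrt_sq_eq_abs]
  have Fr3 : ∀ c, c < m → ¬ lowC c → ∀ x ∈ Ioo (0:ℝ) r, mk2 x (AF (jc c) x) ∈ frontier F := by
    intro c hc hlc x hx
    have hxI : x ∈ Ico (0:ℝ) r := ⟨hx.1.le, hx.2⟩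
    have hAb := (AX2 c hc hlc).2.2 x hxI
    apply FrIn
    · apply hband_to_F c hc
      exact ⟨by simpa using hxI, by simp, by simpa using hABc c hc x hxI⟩
    · intro ε hε
      have hεux : 0 < Min.min ε (u*x) := lt_min hε (mul_pos hu hx.1)
      obtain ⟨δ, hδ0, hδε, hδ⟩ := NB x hx c hc _ hεux
      refine ⟨mk2 x (AF (jc c) x - δ), ?_, ?_⟩
      · apply hnotF
        · refine ⟨by simpa using hxI.1, by simpa using hxI.2, ?_, ?_⟩
          · show -(x*(2*u)) ≤ AF (jc c) x - δ
            have h1 := (abs_le.1 hAb).1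
            have h2 : δ < u*x := lt_of_lt_of_le hδε (min_le_right _ _)
            nlinarith
          · show AF (jc c) x - δ ≤ x*(2*u)
            have h1 := (abs_le.1 hAb).2
            nlinarith [hx.1.le, hu.le, hδ0]
        · intro c' hc' hcon
          exact hδ c' hc' (by simpa using hcon)
      · rw [distv]
        rw [show AF (jc c) x - (AF (jc c) x - δ) = δ by ring, abs_of_pos hδ0]
        exact lt_of_lt_of_le hδε (min_le_left _ _)
  have Fr4 : ∀ c, c < m → ¬ highC c → ∀ x ∈ Ioo (0:ℝ) r, mk2 x (BF (jc c) x) ∈ frontier F := by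
    intro c hc hlc x hx
    have hxI : x ∈ Ico (0:ℝ) r := ⟨hx.1.le, hx.2⟩
    have hAb := (BX2 c hc hlc).2.2 x hxI
    apply FrIn
    · apply hband_to_F c hc
      exact ⟨by simpa using hxI, by simpa using hABc c hc x hxI, by simp⟩
    · intro ε hε
      have hεux : 0 < Min.min ε (u*x) := lt_min hε (mul_pos hu hx.1)
      obtain ⟨δ, hδ0, hδε, hδ⟩ := NA x hx c hc _ hεux
      refine ⟨mk2 x (BF (jc c) x + δ), ?_, ?_⟩
      · apply hnotF
        · refine ⟨by simpa using hxI.1, by simpa using hxI.2, ?_, ?_⟩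
          · show -(x*(2*u)) ≤ BF (jc c) x + δ
            have h1 := (abs_le.1 hAb).1
            nlinarith [hx.1.le, hu.le, hδ0]
          · show BF (jc c) x + δ ≤ x*(2*u)
            have h1 := (abs_le.1 hAb).2
            have h2 : δ < u*x := lt_of_lt_of_le hδε (min_le_right _ _)
            nlinarith
        · intro c' hc' hcon
          exact hδ c' hc' (by simpa using hcon)
      · rw [distv]
        rw [show BF (jc c) x - (BF (jc c) x + δ) = -δ by ring, abs_neg, abs_of_pos hδ0]
        exact lt_of_lt_of_le hδε (min_le_left _ _)
  have Fr0 : (0:E2) ∈ frontier F := by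
    have hsq : ∀ a c2 : ℝ, Real.sqrt (a^2 + c2^2) ≤ |a| + |c2| := by
      intro a c2
      rw [← Real.sqrt_sq (by positivity : (0:ℝ) ≤ |a| + |c2|)]
      apply Real.sqrt_le_sqrt
      nlinarith [sq_abs a, sq_abs c2, abs_nonneg a, abs_nonneg c2,
        mul_nonneg (abs_nonneg a) (abs_nonneg c2)]
    apply FrIn
    · exact hsubF j0 (h0 j0)
    · intro ε hε
      set t := Min.min (r/2) (ε/(2*(1+2*u))) with htdef
      have ht0 : 0 < t := lt_min (by linarith) (div_pos hε (by linarith))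
      have htr : t ∈ Ioo (0:ℝ) r := ⟨ht0, lt_of_le_of_lt (min_le_left _ _) (by linarith)⟩
      have htI : t ∈ Ico (0:ℝ) r := ⟨ht0.le, htr.2⟩
      have htε : t ≤ ε/(2*(1+2*u)) := min_le_right _ _
      have hdistb : ∀ y : ℝ, |y| ≤ 2*u*t → dist (0:E2) (mk2 t y) < ε := by
        intro y hy
        rw [← mk2_zero, dist_mk2]
        calc Real.sqrt ((0-t)^2 + (0-y)^2) ≤ |0-t| + |0-y| := hsq _ _
          _ = t + |y| := by rw [zero_sub, zero_sub, abs_neg, abs_neg, abs_of_pos ht0]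
          _ ≤ t + 2*u*t := by linarith
          _ = t*(1+2*u) := by ring
          _ ≤ (ε/(2*(1+2*u)))*(1+2*u) := mul_le_mul_of_nonneg_right htε (by linarith)
          _ = ε/2 := by field_simp
          _ < ε := by linarith
      by_cases hl0 : lowC 0
      · by_cases hhm : highC (m-1)
        · rcases Nat.lt_or_ge m 2 with hm1 | hm2
          · have hm1' : m = 1 := by omega
            rw [hm1'] at hhm
            exact absurd ⟨hl0, by simpa using hhm⟩ (P4 0 hm0)
          · have h1m : 1 < m := hm2
            have hord := ordc 0 1 one_pos h1m t htr
            set y := (BF (jc 0) t + AF (jc 1) t)/2 with hy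
            have hB0 := B_ub af bf 𝒜 r u H1 (hjc 0 hm0).1 htI
            have hA1ub : AF (jc 1) t ≤ 2*u*t :=
              le_trans (hABc 1 h1m t htI) (B_ub af bf 𝒜 r u H1 (hjc 1 h1m).1 htI)
            have hB0lb : -(2*u*t) ≤ BF (jc 0) t :=
              le_trans (A_lb af bf 𝒜 r u H1 (hjc 0 hm0).1 htI) (hABc 0 hm0 t htI)
            have hA1lb := A_lb af bf 𝒜 r u H1 (hjc 1 h1m).1 htI
            refine ⟨mk2 t y,
              hnotF _ ⟨by simpa using htI.1, by simpa using htI.2, ?_, ?_⟩ ?_, hdistb y ?_⟩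
            · show -(t*(2*u)) ≤ y
              rw [hy]; nlinarith
            · show y ≤ t*(2*u)
              rw [hy]; nlinarith
            · intro c' hc' hcon
              simp only [mk2_c0, mk2_c1] at hcon
              rcases Nat.eq_zero_or_pos c' with rfl | hc'pos
              · have hle2 : y ≤ BF (jc 0) t := hcon.2
                rw [hy] at hle2; linarith
              · have hle : AF (jc 1) t ≤ AF (jc c') t := by
                  rcases eq_or_lt_of_le (Nat.succ_le_of_lt hc'pos) with h1 | h1
                  · rw [← h1]
                  · have ho := ordc 1 c' h1 hc' t htr
                    have hA := hABc 1 h1m t htI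
                    linarith
                have hle2 : AF (jc c') t ≤ y := hcon.1
                rw [hy] at hle2
                linarith
            · rw [hy, abs_le]
              constructor <;> nlinarith
        · have hmm : m - 1 < m := by omega
          have hBtop := (BX2 (m-1) hmm hhm).2.2 t htI
          refine ⟨mk2 t (3/2*u*t),
            hnotF _ ⟨by simpa using htI.1, by simpa using htI.2, ?_, ?_⟩ ?_, hdistb _ ?_⟩
          · show -(t*(2*u)) ≤ 3/2*u*t
            nlinarith
          · show 3/2*u*t ≤ t*(2*u)
            nlinarith
          · intro c' hc' hcon
            simp only [mk2_c0, mk2_c1] at hcon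
            have hBc' : BF (jc c') t ≤ u/2*t := by
              rcases eq_or_lt_of_le (by omega : c' ≤ m-1) with h1 | h1
              · rw [h1]
                exact (abs_le.1 hBtop).2
              · have ho := ordc c' (m-1) h1 hmm t htr
                have h2 := (abs_le.1 hBtop).2
                have h3 := hABc (m-1) hmm t htI
                linarith
            have := hcon.2
            nlinarith
          · rw [abs_le]
            constructor <;> nlinarith
      · have hAbot := (AX2 0 hm0 hl0).2.2 t htI
        refine ⟨mk2 t (-(3/2*u*t)),
          hnotF _ ⟨by simpa using htI.1, by simpa using htI.2, ?_, ?_⟩ ?_, hdistb _ ?_⟩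
        · show -(t*(2*u)) ≤ -(3/2*u*t)
          nlinarith
        · show -(3/2*u*t) ≤ t*(2*u)
          nlinarith
        · intro c' hc' hcon
          simp only [mk2_c0, mk2_c1] at hcon
          have hAc' : -(u/2*t) ≤ AF (jc c') t := by
            rcases Nat.eq_zero_or_pos c' with rfl | h1
            · exact (abs_le.1 hAbot).1
            · have ho := ordc 0 c' h1 hc' t htr
              have h2 := (abs_le.1 hAbot).1
              have h3 := hABc 0 hm0 t htI
              linarith
          have := hcon.1
          nlinarith
        · rw [abs_le]
          constructor <;> nlinarith
  -- ===== stage 5: final assembly =====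
  set gf : ℕ → ℝ → ℝ := fun c => if lowC c then BF (jc c) else AF (jc c) with hgf
  set hf : ℕ → ℝ → ℝ := fun c => if highC c then AF (jc c) else BF (jc c) with hhf
  set ff : ℕ → ℝ → ℝ := fun i => if i % 2 = 0 then gf (i/2) else hf (i/2) with hff
  have GOODg : ∀ c, c < m → IsDCROn (gf c) (Ico 0 r) ∧ HasDerivWithinAt (gf c) 0 (Ici 0) 0 ∧
      (∀ x ∈ Ico (0:ℝ) r, |gf c x| ≤ u/2*x) := by
    intro c hc
    rw [hgf]
    by_cases hl : lowC c
    · simp only [if_pos hl]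
      exact BX2 c hc (fun hh => P4 c hc ⟨hl, hh⟩)
    · simp only [if_neg hl]
      exact AX2 c hc hl
  have GOODh : ∀ c, c < m → IsDCROn (hf c) (Ico 0 r) ∧ HasDerivWithinAt (hf c) 0 (Ici 0) 0 ∧
      (∀ x ∈ Ico (0:ℝ) r, |hf c x| ≤ u/2*x) := by
    intro c hc
    rw [hhf]
    by_cases hh : highC c
    · simp only [if_pos hh]
      exact AX2 c hc (fun hl => P4 c hc ⟨hl, hh⟩)
    · simp only [if_neg hh]
      exact BX2 c hc hh
  have hAg : ∀ c, c < m → ∀ x ∈ Ico (0:ℝ) r, AF (jc c) x ≤ gf c x ∧ gf c x ≤ BF (jc c) x := by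
    intro c hc x hx
    rw [hgf]
    by_cases hl : lowC c
    · simp only [if_pos hl]
      exact ⟨hABc c hc x hx, le_rfl⟩
    · simp only [if_neg hl]
      exact ⟨le_rfl, hABc c hc x hx⟩
  have hAh : ∀ c, c < m → ∀ x ∈ Ico (0:ℝ) r, AF (jc c) x ≤ hf c x ∧ hf c x ≤ BF (jc c) x := by
    intro c hc x hx
    rw [hhf]
    by_cases hh : highC c
    · simp only [if_pos hh]
      exact ⟨le_rfl, hABc c hc x hx⟩
    · simp only [if_neg hh]
      exact ⟨hABc c hc x hx, le_rfl⟩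
  have hgh : ∀ c, c < m → ∀ x ∈ Ico (0:ℝ) r, gf c x ≤ hf c x := by
    intro c hc x hx
    rw [hgf, hhf]
    by_cases hl : lowC c
    · have hh : ¬ highC c := fun hh => P4 c hc ⟨hl, hh⟩
      simp only [if_pos hl, if_neg hh]
      exact le_rfl
    · by_cases hh : highC c
      · simp only [if_neg hl, if_pos hh]
        exact le_rfl
      · simp only [if_neg hl, if_neg hh]
        exact hABc c hc x hx
  have hgh0 : ∀ c, c < m → gf c 0 = 0 ∧ hf c 0 = 0 := by
    intro c hc
    have hz := ZER _ (hjc c hc).1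
    rw [hgf, hhf]
    constructor
    · by_cases hl : lowC c
      · simp only [if_pos hl]; exact hz.2
      · simp only [if_neg hl]; exact hz.1
    · by_cases hh : highC c
      · simp only [if_pos hh]; exact hz.1
      · simp only [if_neg hh]; exact hz.2
  have FrG : ∀ c, c < m → ∀ x ∈ Ioo (0:ℝ) r,
      mk2 x (gf c x) ∈ frontier F ∧ mk2 x (hf c x) ∈ frontier F := by
    intro c hc x hx
    constructor
    · rw [hgf]
      by_cases hl : lowC c
      · simp only [if_pos hl]
        exact Fr4 c hc (fun hh => P4 c hc ⟨hl, hh⟩) x hx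
      · simp only [if_neg hl]
        exact Fr3 c hc hl x hx
    · rw [hhf]
      by_cases hh : highC c
      · simp only [if_pos hh]
        exact Fr3 c hc (fun hl => P4 c hc ⟨hl, hh⟩) x hx
      · simp only [if_neg hh]
        exact Fr4 c hc hh x hx
  -- classification of frontier points inside the cone
  have CLS : ∀ p : E2, p ∈ frontier F → p ∈ coneSet r u → p = 0 ∨
      ∃ c, c < m ∧ 0 < p 0 ∧ (p 1 = AF (jc c) (p 0) ∨ p 1 = BF (jc c) (p 0)) := by
    intro p hpf hpc
    rw [hFc.frontier_eq] at hpf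
    rcases eq_or_lt_of_le hpc.1 with h0' | h0'
    · left
      exact coneSet_eq_zero hpc h0'.symm
    · right
      have hpc2 : p ∈ coneSet r (2*u) := coneSet_mono le_rfl (by linarith) (by linarith) hpc
      have hpb : p ∈ ⋃ c ∈ Finset.range m, Band c := by
        rw [← DECOMP]
        exact ⟨hpf.1, hpc2⟩
      rw [mem_iUnion₂] at hpb
      obtain ⟨c, hcm', hpb⟩ := hpb
      have hcm := Finset.mem_range.1 hcm'
      refine ⟨c, hcm, h0', ?_⟩
      rcases eq_or_lt_of_le hpb.2.1 with hA | hA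
      · exact Or.inl hA.symm
      rcases eq_or_lt_of_le hpb.2.2 with hB | hB
      · exact Or.inr hB
      exact absurd (Fr2 c hcm p ⟨h0', hpc.2.1⟩ hA hB) hpf.2
  right; right
  refine ⟨r, u/2, hr, by positivity, ?_, 2*m, ff, ?_, ?_, ?_, ?_⟩
  · -- condition (i)
    rw [show (2*(u/2):ℝ) = u by ring]
    rintro p ⟨hpf, hpc⟩
    rcases CLS p hpf hpc with rfl | ⟨c, hcm, hp0, hpe⟩
    · exact zero_mem_coneSet hr
    · have hpI : p 0 ∈ Ico (0:ℝ) r := ⟨hpc.1, hpc.2.1⟩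
      have hbd : |p 1| ≤ u/2 * p 0 := by
        rcases hpe with hA | hB
        · by_cases hl : lowC c
          · exfalso
            have hax := AX1 c hcm hl _ hpI
            rw [hax] at hA
            have h2 := hpc.2.2.1
            rw [hA] at h2
            nlinarith
          · rw [hA]
            exact (AX2 c hcm hl).2.2 _ hpI
        · by_cases hh : highC c
          · exfalso
            have hax := BX1 c hcm hh _ hpI
            rw [hax] at hB
            have h2 := hpc.2.2.2
            rw [hB] at h2
            nlinarith
          · rw [hB]
            exact (BX2 c hcm hh).2.2 _ hpI
      have hb := abs_le.1 hbd
      exact ⟨hpc.1, hpc.2.1, by nlinarith [hb.1], by nlinarith [hb.2]⟩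
  · -- condition (ii): DCR and derivative
    intro i hi
    have hcm : i/2 < m := by omega
    rw [hff]
    by_cases hpar : i % 2 = 0
    · simp only [if_pos hpar]
      exact ⟨(GOODg _ hcm).1, (GOODg _ hcm).2.1⟩
    · simp only [if_neg hpar]
      exact ⟨(GOODh _ hcm).1, (GOODh _ hcm).2.1⟩
  · -- condition (iii): monotone chain
    intro i hi x hx
    simp only [hff]
    by_cases hpar : i % 2 = 0
    · have e2 : (i+1)/2 = i/2 := by omega
      rw [if_pos hpar, if_neg (by omega : ¬(i+1) % 2 = 0), e2]
      exact hgh (i/2) (by omega) x hx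
    · have e2 : (i+1)/2 = i/2 + 1 := by omega
      rw [if_neg hpar, if_pos (by omega : (i+1) % 2 = 0), e2]
      have hc1 : i/2 + 1 < m := by omega
      have hc0 : i/2 < m := by omega
      rcases eq_or_lt_of_le hx.1 with h00 | h00
      · rw [← h00, (hgh0 _ hc0).2, (hgh0 _ hc1).1]
      · have hxm : x ∈ Ioo (0:ℝ) r := ⟨h00, hx.2⟩
        have h1 := (hAh (i/2) hc0 x hx).2
        have h2 := (hAg (i/2+1) hc1 x hx).1
        have h3 := ordc (i/2) (i/2+1) (by omega) hc1 x hxm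
        linarith
  · -- condition (iv): graph description of the frontier
    apply Subset.antisymm
    · rintro p ⟨hpf, hpc⟩
      have hpcu : p ∈ coneSet r u := coneSet_mono le_rfl (by linarith) (by linarith) hpc
      rcases CLS p hpf hpcu with rfl | ⟨c, hcm, hp0, hpe⟩
      · refine mem_biUnion (Finset.mem_range.2 (by omega : 0 < 2*m)) ?_
        rw [memGraphOn]
        refine ⟨⟨le_rfl, hr⟩, ?_⟩
        show (0:ℝ) = ff 0 ((0:E2) 0)
        have hff0 : ff 0 = gf 0 := by
          simp only [hff]
          norm_num
        rw [zero_c0, hff0, (hgh0 0 hm0).1]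
      · have hpI : p 0 ∈ Ico (0:ℝ) r := ⟨hpcu.1, hpcu.2.1⟩
        rcases hpe with hA | hB
        · have hl : ¬ lowC c := by
            intro hl
            have hax := AX1 c hcm hl _ hpI
            rw [hax] at hA
            have h2 := hpc.2.2.1
            rw [hA] at h2
            nlinarith
          refine mem_biUnion (Finset.mem_range.2 (by omega : 2*c < 2*m)) ?_
          rw [memGraphOn]
          refine ⟨hpI, ?_⟩
          simp only [hff]
          rw [if_pos (by omega : (2*c) % 2 = 0), (by omega : (2*c)/2 = c), hgf]
          simp only [if_neg hl]
          exact hA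
        · have hh : ¬ highC c := by
            intro hh
            have hax := BX1 c hcm hh _ hpI
            rw [hax] at hB
            have h2 := hpc.2.2.2
            rw [hB] at h2
            nlinarith
          refine mem_biUnion (Finset.mem_range.2 (by omega : 2*c+1 < 2*m)) ?_
          rw [memGraphOn]
          refine ⟨hpI, ?_⟩
          simp only [hff]
          rw [if_neg (by omega : ¬(2*c+1) % 2 = 0), (by omega : (2*c+1)/2 = c), hhf]
          simp only [if_neg hh]
          exact hB
    · intro p hp
      rw [mem_iUnion₂] at hp
      obtain ⟨i, hi', hpg⟩ := hp
      have him := Finset.mem_range.1 hi'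
      rw [memGraphOn] at hpg
      obtain ⟨hpI, hpe⟩ := hpg
      have hcm : i/2 < m := by omega
      have hval : ff i = gf (i/2) ∨ ff i = hf (i/2) := by
        rw [hff]
        by_cases hpar : i % 2 = 0
        · left; simp only [if_pos hpar]
        · right; simp only [if_neg hpar]
      rcases eq_or_lt_of_le hpI.1 with h00 | h00
      · have hv0 : ff i 0 = 0 := by
          rcases hval with h | h
          · rw [h]; exact (hgh0 _ hcm).1
          · rw [h]; exact (hgh0 _ hcm).2
        have hp1 : p 1 = 0 := by rw [hpe, ← h00, hv0]
        have hpz : p = 0 := by rw [← mk2_eta p, ← h00, hp1, mk2_zero]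
        rw [hpz]
        exact ⟨Fr0, zero_mem_coneSet hr⟩
      · have hxm : p 0 ∈ Ioo (0:ℝ) r := ⟨h00, hpI.2⟩
        have hb : |ff i (p 0)| ≤ u/2 * (p 0) := by
          rcases hval with h | h
          · rw [h]; exact (GOODg _ hcm).2.2 _ hpI
          · rw [h]; exact (GOODh _ hcm).2.2 _ hpI
        constructor
        · have hfg := FrG (i/2) hcm (p 0) hxm
          rcases hval with h | h
          · rw [← mk2_eta p, hpe, h]
            exact hfg.1
          · rw [← mk2_eta p, hpe, h]
            exact hfg.2
        · have hble := abs_le.1 hb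
          refine ⟨hpI.1, hpI.2, ?_, ?_⟩
          · rw [hpe]; nlinarith [hble.1]
          · rw [hpe]; nlinarith [hble.2]
  · -- condition (v): touching
    intro i hi htouch
    by_cases hpar : i % 2 = 0
    · intro p hp
      obtain ⟨hp0, hp1, hp2⟩ := hp
      apply hband_to_F (i/2) (by omega)
      simp only [hff] at hp1 hp2
      rw [if_pos hpar] at hp1
      rw [if_neg (by omega : ¬(i+1) % 2 = 0), (by omega : (i+1)/2 = i/2)] at hp2
      exact ⟨hp0, le_trans (hAg (i/2) (by omega) _ hp0).1 hp1,
        le_trans hp2 (hAh (i/2) (by omega) _ hp0).2⟩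
    · exfalso
      obtain ⟨x, hx, heq⟩ := htouch
      simp only [hff] at heq
      rw [if_neg hpar, if_pos (by omega : (i+1) % 2 = 0),
        (by omega : (i+1)/2 = i/2+1)] at heq
      have hc1 : i/2 + 1 < m := by omega
      have hc0 : i/2 < m := by omega
      have hxI : x ∈ Ico (0:ℝ) r := ⟨hx.1.le, hx.2⟩
      have h1 := (hAh (i/2) hc0 x hxI).2
      have h2 := (hAg (i/2+1) hc1 x hxI).1
      have h3 := ordc (i/2) (i/2+1) (by omega) hc1 x hx
      linarith [heq.le, heq.ge]


end MainSec
-- ====== glue: the theorem proof body as a lemma ======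
section GlueSec
open Set Filter Topology

lemma glue_theorem
    (M : Set (EuclideanSpace ℝ (Fin 2))) (hMcl : IsClosed M)
    (x v : EuclideanSpace ℝ (Fin 2)) (hx : x ∈ M) (hv : ‖v‖ = 1)
    (N : ℕ) (Mj : Fin N → Set (EuclideanSpace ℝ (Fin 2)))
    (hcl : ∀ j, IsClosed (Mj j)) (hun : M = ⋃ j, Mj j)
    (hI : ∀ I : Finset (Fin N), I.Nonempty →
      x ∈ ⋂ j ∈ I, Mj j ∧
      (OfTypeT1 (⋂ j ∈ I, Mj j) x v ∨ OfTypeT2 (⋂ j ∈ I, Mj j) x v ∨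
        OfTypeT3 (⋂ j ∈ I, Mj j) x v ∨ OfTypeT4 (⋂ j ∈ I, Mj j) x v ∨
        OfTypeT5 (⋂ j ∈ I, Mj j) x v)) :
    OfTypeTT1 M x v ∨ OfTypeTT2 M x v ∨ OfTypeTT3 M x v := by
  classical
  rcases Nat.eq_zero_or_pos N with rfl | hN
  · rw [hun] at hx
    simp only [mem_iUnion] at hx
    obtain ⟨j, -⟩ := hx
    exact absurd j.2 (by omega)
  set γ := gammaMap x v with hγ
  set F := γ ⁻¹' M with hF
  have hγcont : Continuous γ := by
    rw [hγ]
    unfold gammaMap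
    exact (continuous_const.add (cont_c0.smul continuous_const)).add
      (cont_c1.smul continuous_const)
  have hFc : IsClosed F := hMcl.preimage hγcont
  set Nj' : Fin N → Set E2 := fun j => γ ⁻¹' (Mj j) with hNj'
  have hunF : F = ⋃ j, Nj' j := by
    rw [hF, hun, preimage_iUnion]
  have h0j : ∀ j, (0:E2) ∈ Nj' j := by
    intro j
    have hxj : x ∈ Mj j := by
      have h := (hI {j} (Finset.singleton_nonempty j)).1
      simpa using h
    show γ 0 ∈ Mj j
    have hγ0 : γ 0 = x := by
      rw [hγ]
      show x + (0:E2) 0 • v + (0:E2) 1 • rot90 v = x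
      rw [zero_c0, zero_c1, zero_smul, zero_smul, add_zero, add_zero]
    rwa [hγ0]
  have hDesc : ∀ I : {I : Finset (Fin N) // I.Nonempty}, ∃ rI uI : ℝ, 0 < rI ∧ 0 < uI ∧
      (IsT1Set (⋂ j ∈ I.1, Nj' j) rI uI ∨ IsT2Set (⋂ j ∈ I.1, Nj' j) rI uI ∨
       IsT3Set (⋂ j ∈ I.1, Nj' j) rI uI ∨ IsT4Set (⋂ j ∈ I.1, Nj' j) rI uI ∨
       IsT5Set (⋂ j ∈ I.1, Nj' j) rI uI) := by
    rintro ⟨I, hIne⟩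
    have hpre : γ ⁻¹' (⋂ j ∈ I, Mj j) = ⋂ j ∈ I, Nj' j := by
      rw [preimage_iInter₂]
    rcases (hI I hIne).2 with h | h | h | h | h
    · obtain ⟨rI, uI, h1, h2, h3⟩ := h
      rw [hpre] at h3
      exact ⟨rI, uI, h1, h2, Or.inl h3⟩
    · obtain ⟨rI, uI, h1, h2, h3⟩ := h
      rw [hpre] at h3
      exact ⟨rI, uI, h1, h2, Or.inr (Or.inl h3)⟩
    · obtain ⟨rI, uI, h1, h2, h3⟩ := h
      rw [hpre] at h3
      exact ⟨rI, uI, h1, h2, Or.inr (Or.inr (Or.inl h3))⟩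
    · obtain ⟨rI, uI, h1, h2, h3⟩ := h
      rw [hpre] at h3
      exact ⟨rI, uI, h1, h2, Or.inr (Or.inr (Or.inr (Or.inl h3)))⟩
    · obtain ⟨rI, uI, h1, h2, h3⟩ := h
      rw [hpre] at h3
      exact ⟨rI, uI, h1, h2, Or.inr (Or.inr (Or.inr (Or.inr h3)))⟩
  choose rf uf hrf huf hdesc using hDesc
  haveI hne : Nonempty {I : Finset (Fin N) // I.Nonempty} :=
    ⟨⟨{⟨0, hN⟩}, Finset.singleton_nonempty _⟩⟩
  have hUne : (Finset.univ : Finset {I : Finset (Fin N) // I.Nonempty}).Nonempty :=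
    Finset.univ_nonempty
  set u0 := Finset.univ.inf' hUne uf with hu0
  have hu0pos : 0 < u0 := by
    obtain ⟨I, -, hEq⟩ := Finset.exists_mem_eq_inf' hUne uf
    rw [hu0, hEq]
    exact huf I
  have hu0le : ∀ I, u0 ≤ uf I := fun I => Finset.inf'_le _ (Finset.mem_univ I)
  have hshr : ∀ I : {I : Finset (Fin N) // I.Nonempty},
      ∃ r', 0 < r' ∧ r' ≤ rf I ∧ DescH (⋂ j ∈ I.1, Nj' j) r' u0 :=
    fun I => DescH_of_Desc (hrf I) (huf I) hu0pos (hu0le I) (hdesc I)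
  choose rf' hrf'pos hrf'le hdescH using hshr
  set r0 := Finset.univ.inf' hUne rf' with hr0
  have hr0pos : 0 < r0 := by
    obtain ⟨I, -, hEq⟩ := Finset.exists_mem_eq_inf' hUne rf'
    rw [hr0, hEq]
    exact hrf'pos I
  have hr0le : ∀ I, r0 ≤ rf' I := fun I => Finset.inf'_le _ (Finset.mem_univ I)
  have hDH : ∀ I : Finset (Fin N), I.Nonempty → DescH (⋂ j ∈ I, Nj' j) r0 u0 := by
    intro I hIne
    exact (hdescH ⟨I, hIne⟩).mono_r hr0pos (hr0le ⟨I, hIne⟩) hu0pos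
  rcases main_lemma F hFc hr0pos hu0pos Nj' hunF hN h0j hDH with
    ⟨r', u', h1, h2, h3⟩ | ⟨r', u', h1, h2, h3⟩ | ⟨r', u', h1, h2, h3⟩
  · exact Or.inl ⟨r', u', h1, h2, h3⟩
  · exact Or.inr (Or.inl ⟨r', u', h1, h2, h3⟩)
  · exact Or.inr (Or.inr ⟨r', u', h1, h2, h3⟩)

end GlueSec
/-- Let `M ⊆ ℝ²` be closed, `x ∈ M`, `v` a unit vector, and suppose
`M = M₁ ∪ ⋯ ∪ M_N` with each `M j` closed and such that for every nonempty
`I ⊆ {1,…,N}` the set `M_I = ⋂_{j ∈ I} M j` contains `x` and is of type `T^i` at `x` in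
direction `v` for some `i ∈ {1,…,5}`.  Then `M` is of type `𝒯^i` at `x` in direction `v`
for some `i ∈ {1,2,3}`. -/
theorem type_of_union_from_types_of_intersections
    (M : Set (EuclideanSpace ℝ (Fin 2))) (hMcl : IsClosed M)
    (x v : EuclideanSpace ℝ (Fin 2)) (hx : x ∈ M) (hv : ‖v‖ = 1)
    (N : ℕ) (Mj : Fin N → Set (EuclideanSpace ℝ (Fin 2)))
    (hcl : ∀ j, IsClosed (Mj j)) (hun : M = ⋃ j, Mj j)
    (hI : ∀ I : Finset (Fin N), I.Nonempty →
      x ∈ ⋂ j ∈ I, Mj j ∧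
      (OfTypeT1 (⋂ j ∈ I, Mj j) x v ∨ OfTypeT2 (⋂ j ∈ I, Mj j) x v ∨
        OfTypeT3 (⋂ j ∈ I, Mj j) x v ∨ OfTypeT4 (⋂ j ∈ I, Mj j) x v ∨
        OfTypeT5 (⋂ j ∈ I, Mj j) x v)) :
    OfTypeTT1 M x v ∨ OfTypeTT2 M x v ∨ OfTypeTT3 M x v := by
  exact glue_theorem M hMcl x v hx hv N Mj hcl hun hI
end

section
/- Let M ⊆ ℝ² be a closed set and let x ∈ M ∩ ∂M. Suppose that for every unit vector v ∈ S¹ there exists i ∈ {1, 2, 3} such that M is of type 𝒯^i at x in direction v. Then the set of unit vectors v ∈ S¹ at which M is of type 𝒯³ at x in direction v is finite. -/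
open Set
open scoped RealInnerProductSpace

local notation "E2" => EuclideanSpace ℝ (Fin 2)

lemma inner_e2 (a b : E2) : ⟪a, b⟫ = a 0 * b 0 + a 1 * b 1 := by
  simp [PiLp.inner_apply, Fin.sum_univ_two, RCLike.inner_apply, starRingEnd_apply]
  ring

lemma rot90_0 (v : E2) : rot90 v 0 = -(v 1) := rfl
lemma rot90_1 (v : E2) : rot90 v 1 = v 0 := rfl

lemma gammaMap_apply (z v p : E2) (i : Fin 2) :
    gammaMap z v p i = z i + p 0 * v i + p 1 * rot90 v i := rfl

lemma unit_sq {v : E2} (hv : ‖v‖ = 1) : v 0 * v 0 + v 1 * v 1 = 1 := by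
  have := real_inner_self_eq_norm_sq v
  rw [inner_e2, hv] at this
  linarith [this]

noncomputable def gammaInv (z v : E2) : E2 → E2 :=
  fun q => !₂[⟪q - z, v⟫, ⟪q - z, rot90 v⟫]

lemma gammaMap_zero (z v : E2) : gammaMap z v 0 = z := by
  ext i
  show z i + (0:E2) 0 * v i + (0:E2) 1 * rot90 v i = z i
  have h0 : (0:E2) 0 = 0 := rfl
  have h1 : (0:E2) 1 = 0 := rfl
  rw [h0, h1]; ring

lemma gammaInv_gammaMap {v : E2} (hv : ‖v‖ = 1) (z p : E2) :
    gammaInv z v (gammaMap z v p) = p := by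
  have hsq := unit_sq hv
  ext i
  fin_cases i
  · simp only [gammaInv, gammaMap, rot90, inner_e2]
    simp only [PiLp.sub_apply, PiLp.add_apply, PiLp.smul_apply, smul_eq_mul]
    simp [Matrix.cons_val_zero, Matrix.cons_val_one]
    linear_combination (p 0) * hsq
  · simp only [gammaInv, gammaMap, rot90, inner_e2]
    simp only [PiLp.sub_apply, PiLp.add_apply, PiLp.smul_apply, smul_eq_mul]
    simp [Matrix.cons_val_zero, Matrix.cons_val_one]
    linear_combination (p 1) * hsq

lemma gammaMap_gammaInv {v : E2} (hv : ‖v‖ = 1) (z q : E2) :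
    gammaMap z v (gammaInv z v q) = q := by
  have hsq := unit_sq hv
  ext i
  fin_cases i
  · simp only [gammaInv, gammaMap, rot90, inner_e2]
    simp only [PiLp.sub_apply, PiLp.add_apply, PiLp.smul_apply, smul_eq_mul]
    simp [Matrix.cons_val_zero, Matrix.cons_val_one]
    linear_combination (q 0 - z 0) * hsq
  · simp only [gammaInv, gammaMap, rot90, inner_e2]
    simp only [PiLp.sub_apply, PiLp.add_apply, PiLp.smul_apply, smul_eq_mul]
    simp [Matrix.cons_val_zero, Matrix.cons_val_one]
    linear_combination (q 1 - z 1) * hsq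

lemma continuous_proj (i : Fin 2) : Continuous fun q : E2 => q i :=
  (EuclideanSpace.proj i : E2 →L[ℝ] ℝ).continuous

lemma continuous_gammaMap (z v : E2) : Continuous (gammaMap z v) := by
  unfold gammaMap
  exact continuous_const.add
    (((continuous_proj 0).smul continuous_const)) |>.add
    ((continuous_proj 1).smul continuous_const)

lemma continuous_gammaInv (z v : E2) : Continuous (gammaInv z v) := by
  unfold gammaInv
  have h : ∀ w : E2, Continuous fun q : E2 => ⟪q - z, w⟫ := fun w =>
    Continuous.inner (continuous_id.sub continuous_const) continuous_const
  apply (PiLp.continuous_toLp 2 _).comp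
  apply continuous_pi
  intro i
  fin_cases i
  · exact h v
  · exact h (rot90 v)

noncomputable def gammaHomeo (z v : E2) (hv : ‖v‖ = 1) : E2 ≃ₜ E2 where
  toFun := gammaMap z v
  invFun := gammaInv z v
  left_inv := gammaInv_gammaMap hv z
  right_inv := gammaMap_gammaInv hv z
  continuous_toFun := continuous_gammaMap z v
  continuous_invFun := continuous_gammaInv z v

lemma frontier_preimage_gamma (M : Set E2) (z v : E2) (hv : ‖v‖ = 1) :
    frontier (gammaMap z v ⁻¹' M) = gammaMap z v ⁻¹' frontier M :=
  ((gammaHomeo z v hv).preimage_frontier M).symm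


lemma tt3_small_slope_points {N : Set (EuclideanSpace ℝ (Fin 2))} {r u : ℝ} (hr : 0 < r)
    (hu : 0 < u) (hN : IsTT3Set N r u) (h0 : (0 : E2) ∈ frontier N) :
    ∀ ε > 0, ∀ δ > 0, ∃ p : E2, p ∈ frontier N ∧ 0 < p 0 ∧ p 0 < δ ∧ |p 1| ≤ ε * p 0 := by
  obtain ⟨hsub, n, f, hDC, hmono, hgraphs, hbetween⟩ := hN
  intro ε hε δ hδ
  have hz : ∀ i : Fin 2, (0 : E2) i = 0 := fun _ => rfl
  have h0cone : (0 : E2) ∈ coneSet r u := by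
    simp only [coneSet, mem_setOf_eq, hz]
    norm_num [hr]
  have h0union : (0 : E2) ∈ ⋃ i ∈ Finset.range n, _root_.graphOn (f i) r := by
    rw [← hgraphs]; exact ⟨h0, h0cone⟩
  obtain ⟨i, hi, t, ⟨ht0, htr⟩, hteq⟩ := by
    simpa only [mem_iUnion, _root_.graphOn, mem_image, exists_prop] using h0union
  have hi' : i < n := Finset.mem_range.mp hi
  have ht : t = 0 := congrArg (fun p : E2 => p 0) hteq
  have hf0 : f i 0 = 0 := by have := congrArg (fun p : E2 => p 1) hteq; rwa [ht] at this
  have hder : HasDerivWithinAt (f i) 0 (Ici 0) 0 := (hDC i hi').2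
  rw [hasDerivWithinAt_iff_isLittleO] at hder
  have hev := Asymptotics.IsLittleO.def hder hε
  obtain ⟨δ', hδ', hball⟩ := Metric.mem_nhdsWithin_iff.mp hev
  set t0 : ℝ := min (min δ δ') r / 2 with ht0def
  have ht0pos : 0 < t0 := by positivity
  have ht0δ : t0 < δ := by
    have : min (min δ δ') r ≤ δ := le_trans (min_le_left _ _) (min_le_left _ _)
    linarith
  have ht0δ' : t0 < δ' := by
    have : min (min δ δ') r ≤ δ' := le_trans (min_le_left _ _) (min_le_right _ _)
    linarith
  have ht0r : t0 < r := by
    have : min (min δ δ') r ≤ r := min_le_right _ _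
    linarith
  have hbd := hball ⟨by
      rw [Metric.mem_ball, Real.dist_eq, sub_zero, abs_of_pos ht0pos]; exact ht0δ',
    mem_Ici.mpr ht0pos.le⟩
  simp only [mem_setOf_eq, hf0, sub_zero, smul_zero, Real.norm_eq_abs] at hbd
  rw [abs_of_pos ht0pos] at hbd
  have hbd' : |(!₂[t0, f i t0] : E2) 1| ≤ ε * (!₂[t0, f i t0] : E2) 0 := hbd
  refine ⟨!₂[t0, f i t0], ?_, ht0pos, ht0δ, hbd'⟩
  have hmem : (!₂[t0, f i t0] : E2) ∈ ⋃ j ∈ Finset.range n, _root_.graphOn (f j) r := by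
    simp only [mem_iUnion, exists_prop]
    exact ⟨i, hi, t0, ⟨ht0pos.le, ht0r⟩, rfl⟩
  rw [← hgraphs] at hmem
  exact hmem.1

lemma cs_sq {v v₀ : E2} (hv : ‖v‖ = 1) (hv₀ : ‖v₀‖ = 1) :
    ⟪v, v₀⟫ ^ 2 + ⟪v, rot90 v₀⟫ ^ 2 = 1 := by
  simp only [inner_e2, rot90_0, rot90_1]
  have h1 := unit_sq hv
  have h2 := unit_sq hv₀
  nlinarith [h1, h2]

lemma abs_c_le_one {v v₀ : E2} (hv : ‖v‖ = 1) (hv₀ : ‖v₀‖ = 1) : |⟪v, v₀⟫| ≤ 1 := by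
  have := abs_real_inner_le_norm v v₀
  rwa [hv, hv₀, mul_one] at this

lemma c_eq {v v₀ : E2} (hv : ‖v‖ = 1) (hv₀ : ‖v₀‖ = 1) :
    ⟪v, v₀⟫ = 1 - ‖v - v₀‖ ^ 2 / 2 := by
  have h := norm_sub_sq_real v v₀
  rw [hv, hv₀] at h
  nlinarith [h]

lemma abs_s_le {v v₀ : E2} (hv : ‖v‖ = 1) (hv₀ : ‖v₀‖ = 1) :
    |⟪v, rot90 v₀⟫| ≤ ‖v - v₀‖ := by
  have hcs := cs_sq hv hv₀
  have hc := c_eq hv hv₀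
  have hc1 : |⟪v, v₀⟫| ≤ 1 := abs_c_le_one hv hv₀
  have h1 : ⟪v, v₀⟫ ≤ 1 := le_of_abs_le hc1
  have hnn : (0:ℝ) ≤ ‖v - v₀‖ := norm_nonneg _
  have hsq : ⟪v, rot90 v₀⟫ ^ 2 ≤ ‖v - v₀‖ ^ 2 := by nlinarith
  exact abs_le_of_sq_le_sq' (by nlinarith [sq_abs ⟪v, rot90 v₀⟫]) hnn |>.2

lemma gammaInv_0 (z v q : E2) : gammaInv z v q 0 = ⟪q - z, v⟫ := rfl
lemma gammaInv_1 (z v q : E2) : gammaInv z v q 1 = ⟪q - z, rot90 v⟫ := rfl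

lemma frontier_transfer {M : Set (EuclideanSpace ℝ (Fin 2))} {x v v₀ : E2}
    (hv : ‖v‖ = 1) (hv₀ : ‖v₀‖ = 1) {p : E2}
    (hp : p ∈ frontier (gammaMap x v ⁻¹' M)) :
    ∃ q : E2, q ∈ frontier (gammaMap x v₀ ⁻¹' M) ∧
      q 0 = p 0 * ⟪v, v₀⟫ - p 1 * ⟪v, rot90 v₀⟫ ∧
      q 1 = p 0 * ⟪v, rot90 v₀⟫ + p 1 * ⟪v, v₀⟫ := by
  rw [frontier_preimage_gamma M x v hv] at hp
  refine ⟨gammaInv x v₀ (gammaMap x v p), ?_, ?_, ?_⟩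
  · rw [frontier_preimage_gamma M x v₀ hv₀]
    show gammaMap x v₀ (gammaInv x v₀ _) ∈ frontier M
    rw [gammaMap_gammaInv hv₀]
    exact hp
  · rw [gammaInv_0, inner_e2, inner_e2, inner_e2]
    simp only [PiLp.sub_apply, gammaMap_apply, rot90_0, rot90_1]
    ring
  · rw [gammaInv_1, inner_e2, inner_e2, inner_e2]
    simp only [PiLp.sub_apply, gammaMap_apply, rot90_0, rot90_1]
    ring

lemma zero_mem_frontier_pre {M : Set (EuclideanSpace ℝ (Fin 2))} {x v : E2} (hv : ‖v‖ = 1)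
    (hxbd : x ∈ frontier M) : (0 : E2) ∈ frontier (gammaMap x v ⁻¹' M) := by
  rw [frontier_preimage_gamma M x v hv]
  show gammaMap x v 0 ∈ frontier M
  rw [gammaMap_zero]
  exact hxbd

lemma exists_q {M : Set (EuclideanSpace ℝ (Fin 2))} {x v v₀ : E2} (hv : ‖v‖ = 1)
    (hv₀ : ‖v₀‖ = 1) (hxbd : x ∈ frontier M) (hvT3 : OfTypeTT3 M x v)
    {ε δ : ℝ} (hε : 0 < ε) (hδ : 0 < δ) :
    ∃ (q : E2) (a b : ℝ), q ∈ frontier (gammaMap x v₀ ⁻¹' M) ∧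
      0 < a ∧ a < δ ∧ |b| ≤ ε * a ∧
      q 0 = a * ⟪v, v₀⟫ - b * ⟪v, rot90 v₀⟫ ∧
      q 1 = a * ⟪v, rot90 v₀⟫ + b * ⟪v, v₀⟫ := by
  obtain ⟨r₃, u₃, hr₃, hu₃, hT3⟩ := hvT3
  obtain ⟨p, hpfr, hp0, hpδ, hp1⟩ :=
    tt3_small_slope_points hr₃ hu₃ hT3 (zero_mem_frontier_pre hv hxbd) ε hε δ hδ
  obtain ⟨q, hq, h0, h1⟩ := frontier_transfer hv hv₀ hpfr
  exact ⟨q, p 0, p 1, hq, hp0, hpδ, hp1, h0, h1⟩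

lemma cone_estimates {c s a b ε η : ℝ} (hc : 1 - η ^ 2 / 2 ≤ c) (hc1 : c ≤ 1)
    (hs : |s| ≤ η) (hb : |b| ≤ ε * a) (ha : 0 < a) (hε : 0 < ε) (hεη : ε ≤ η)
    (hη : 0 < η) (hη2 : η ≤ 1 / 2) :
    a / 2 ≤ a * c - b * s ∧ a * c - b * s ≤ 2 * a ∧ |a * s + b * c| ≤ 2 * η * a := by
  obtain ⟨hs1, hs2⟩ := abs_le.mp hs
  obtain ⟨hb1, hb2⟩ := abs_le.mp hb
  have hbs : |b * s| ≤ ε * a * η := by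
    rw [abs_mul]
    exact mul_le_mul hb hs (abs_nonneg _) (by positivity)
  obtain ⟨hbs1, hbs2⟩ := abs_le.mp hbs
  have hεa : ε * a * η ≤ a / 4 := by nlinarith
  have hcpos : 0 < c := by nlinarith
  refine ⟨by nlinarith, by nlinarith, ?_⟩
  have h1 : |a * s| ≤ a * η := by
    rw [abs_mul, abs_of_pos ha]
    exact mul_le_mul_of_nonneg_left hs ha.le
  have h2 : |b * c| ≤ ε * a := by
    rw [abs_mul]
    calc |b| * |c| ≤ |b| * 1 := mul_le_mul_of_nonneg_left (by rw [abs_of_pos hcpos]; exact hc1) (abs_nonneg _)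
    _ = |b| := mul_one _
    _ ≤ ε * a := hb
  calc |a * s + b * c| ≤ |a * s| + |b * c| := abs_add_le _ _
  _ ≤ a * η + ε * a := add_le_add h1 h2
  _ ≤ 2 * η * a := by nlinarith

lemma deriv_zero_bound {g : ℝ → ℝ} (hg0 : g 0 = 0)
    (hder : HasDerivWithinAt g 0 (Ici 0) 0) {σ : ℝ} (hσ : 0 < σ) :
    ∃ τ > 0, ∀ t, 0 ≤ t → t < τ → |g t| ≤ σ * t := by
  rw [hasDerivWithinAt_iff_isLittleO] at hder
  have hev := Asymptotics.IsLittleO.def hder hσ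
  obtain ⟨τ, hτ, hball⟩ := Metric.mem_nhdsWithin_iff.mp hev
  refine ⟨τ, hτ, fun t ht0 htτ => ?_⟩
  have hmem := hball ⟨by
      rw [Metric.mem_ball, Real.dist_eq, sub_zero, abs_of_nonneg ht0]; exact htτ,
    mem_Ici.mpr ht0⟩
  simp only [mem_setOf_eq, hg0, sub_zero, smul_zero, Real.norm_eq_abs,
    abs_of_nonneg ht0] at hmem
  exact hmem

lemma exists_uniform_tau {n : ℕ} {P : ℕ → ℝ → Prop}
    (hmono : ∀ i τ' τ, τ' ≤ τ → P i τ → P i τ')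
    (h : ∀ i < n, ∃ τ > 0, P i τ) : ∃ τ > 0, ∀ i < n, P i τ := by
  induction n with
  | zero => exact ⟨1, one_pos, fun i hi => absurd hi (Nat.not_lt_zero i)⟩
  | succ m ih =>
    obtain ⟨τ₁, hτ₁, h₁⟩ := ih fun i hi => h i (Nat.lt_succ_of_lt hi)
    obtain ⟨τ₂, hτ₂, h₂⟩ := h m (Nat.lt_succ_self m)
    refine ⟨min τ₁ τ₂, lt_min hτ₁ hτ₂, fun i hi => ?_⟩
    rcases Nat.lt_succ_iff_lt_or_eq.mp hi with h' | rfl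
    · exact hmono i _ τ₁ (min_le_left _ _) (h₁ i h')
    · exact hmono _ _ τ₂ (min_le_right _ _) h₂

lemma s_ne_zero {v v₀ : E2} (hv : ‖v‖ = 1) (hv₀ : ‖v₀‖ = 1) (hne : v ≠ v₀)
    (hclose : ‖v - v₀‖ ≤ 1 / 2) : ⟪v, rot90 v₀⟫ ≠ 0 := by
  intro hs
  have hcs := cs_sq hv hv₀
  rw [hs] at hcs
  have hc := c_eq hv hv₀
  have hnn : (0:ℝ) ≤ ‖v - v₀‖ := norm_nonneg _
  have h1 : ‖v - v₀‖ ^ 2 ≤ 1 / 4 := by nlinarith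
  have h2 : ‖v - v₀‖ ^ 2 = 0 := by nlinarith
  have h3 : ‖v - v₀‖ = 0 := by nlinarith
  exact hne (sub_eq_zero.mp (norm_eq_zero.mp h3))

lemma common_setup {M : Set (EuclideanSpace ℝ (Fin 2))} {x v v₀ : E2}
    (hv : ‖v‖ = 1) (hv₀ : ‖v₀‖ = 1) (hxbd : x ∈ frontier M) (hvT3 : OfTypeTT3 M x v)
    {u ε δ : ℝ} (hu : 0 < u) (hδ : 0 < δ) (hε : 0 < ε)
    (hεη : ε ≤ min (1/2) (u/4)) (hclose : ‖v - v₀‖ ≤ min (1/2) (u/4)) :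
    ∃ (q : E2) (a b : ℝ), q ∈ frontier (gammaMap x v₀ ⁻¹' M) ∧
      0 < a ∧ a < δ ∧ |b| ≤ ε * a ∧
      q 0 = a * ⟪v, v₀⟫ - b * ⟪v, rot90 v₀⟫ ∧
      q 1 = a * ⟪v, rot90 v₀⟫ + b * ⟪v, v₀⟫ ∧
      a / 2 ≤ q 0 ∧ q 0 ≤ 2 * a ∧ |q 1| ≤ 2 * min (1/2) (u/4) * a ∧
      |q 1| ≤ (u / 2) * a ∧ q 1 ≤ q 0 * (2 * u) ∧ -(q 0 * (2 * u)) ≤ q 1 := by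
  set η := min (1/2 : ℝ) (u/4) with hηdef
  have hηpos : 0 < η := lt_min (by norm_num) (by positivity)
  have hη2 : η ≤ 1/2 := min_le_left _ _
  have hηu : η ≤ u/4 := min_le_right _ _
  obtain ⟨q, a, b, hqfr, ha, haδ, hb, hq0, hq1⟩ := exists_q hv hv₀ hxbd hvT3 hε hδ
  have hc : 1 - η ^ 2 / 2 ≤ ⟪v, v₀⟫ := by
    rw [c_eq hv hv₀]
    nlinarith [norm_nonneg (v - v₀)]
  have hc1 : ⟪v, v₀⟫ ≤ 1 := le_of_abs_le (abs_c_le_one hv hv₀)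
  have hs : |⟪v, rot90 v₀⟫| ≤ η := le_trans (abs_s_le hv hv₀) hclose
  obtain ⟨hlow, hhigh, habs⟩ := cone_estimates hc hc1 hs hb ha hε hεη hηpos hη2
  rw [← hq0] at hlow hhigh
  rw [← hq1] at habs
  have habs2 : |q 1| ≤ (u/2) * a := le_trans habs (by nlinarith)
  obtain ⟨hq1a, hq1b⟩ := abs_le.mp habs2
  refine ⟨q, a, b, hqfr, ha, haδ, hb, hq0, hq1, hlow, hhigh, habs, habs2, ?_, ?_⟩ <;>
    nlinarith

lemma case_t1 {M : Set (EuclideanSpace ℝ (Fin 2))} (hMcl : IsClosed M) {x v v₀ : E2}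
    (hv : ‖v‖ = 1) (hv₀ : ‖v₀‖ = 1) (hxbd : x ∈ frontier M) {r u : ℝ} (hr : 0 < r)
    (hu : 0 < u) (hT1 : IsT1Set (gammaMap x v₀ ⁻¹' M) r u)
    (hvT3 : OfTypeTT3 M x v) (hclose : ‖v - v₀‖ ≤ min (1/2) (u/4)) : False := by
  have hηpos : 0 < min (1/2 : ℝ) (u/4) := lt_min (by norm_num) (by positivity)
  obtain ⟨q, a, b, hqfr, ha, haδ, hb, hq0, hq1, hlow, hhigh, habs, habs2, hcone1, hcone2⟩ :=
    common_setup hv hv₀ hxbd hvT3 hu (half_pos hr) hηpos (le_refl _) hclose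
  have hN₀cl : IsClosed (gammaMap x v₀ ⁻¹' M) := hMcl.preimage (continuous_gammaMap x v₀)
  have hqmem : q ∈ gammaMap x v₀ ⁻¹' M := hN₀cl.frontier_subset hqfr
  have hqcone : q ∈ coneSet r (2 * u) := ⟨by nlinarith, by nlinarith, hcone2, hcone1⟩
  have hq0' : q ∈ ({0} : Set E2) := hT1 ▸ ⟨hqmem, hqcone⟩
  rw [mem_singleton_iff] at hq0'
  have : q 0 = 0 := by rw [hq0']; rfl
  nlinarith

lemma case_t2 {M : Set (EuclideanSpace ℝ (Fin 2))} {x v v₀ : E2}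
    (hv : ‖v‖ = 1) (hv₀ : ‖v₀‖ = 1) (hxbd : x ∈ frontier M) {r u : ℝ} (hr : 0 < r)
    (hu : 0 < u) (hT2 : IsT2Set (gammaMap x v₀ ⁻¹' M) r u)
    (hvT3 : OfTypeTT3 M x v) (hclose : ‖v - v₀‖ ≤ min (1/2) (u/4)) : False := by
  have hηpos : 0 < min (1/2 : ℝ) (u/4) := lt_min (by norm_num) (by positivity)
  obtain ⟨q, a, b, hqfr, ha, haδ, hb, hq0, hq1, hlow, hhigh, habs, habs2, hcone1, hcone2⟩ :=
    common_setup hv hv₀ hxbd hvT3 hu (half_pos hr) hηpos (le_refl _) hclose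
  obtain ⟨hq1a, hq1b⟩ := abs_le.mp habs2
  set O : Set E2 := {q | 0 < q 0 ∧ q 0 < r ∧ -(q 0 * (2*u)) < q 1 ∧ q 1 < q 0 * (2*u)}
    with hOdef
  have hOopen : IsOpen O := by
    refine IsOpen.inter (isOpen_lt continuous_const (continuous_proj 0)) ?_
    refine IsOpen.inter (isOpen_lt (continuous_proj 0) continuous_const) ?_
    exact IsOpen.inter
      (isOpen_lt (((continuous_proj 0).mul continuous_const).neg) (continuous_proj 1))
      (isOpen_lt (continuous_proj 1) ((continuous_proj 0).mul continuous_const))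
  have hOsub : O ⊆ gammaMap x v₀ ⁻¹' M := fun q hq =>
    hT2 ⟨hq.1.le, hq.2.1, hq.2.2.1.le, hq.2.2.2.le⟩
  have hqO : q ∈ O := by
    refine ⟨by nlinarith, by nlinarith, by nlinarith, by nlinarith⟩
  have hqint : q ∈ interior (gammaMap x v₀ ⁻¹' M) :=
    interior_maximal hOsub hOopen hqO
  exact disjoint_interior_frontier.ne_of_mem hqint hqfr rfl

set_option maxHeartbeats 1000000 in
lemma case_t3 {M : Set (EuclideanSpace ℝ (Fin 2))} {x v v₀ : E2}
    (hv : ‖v‖ = 1) (hv₀ : ‖v₀‖ = 1) (hxbd : x ∈ frontier M) {r u : ℝ} (hr : 0 < r)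
    (hu : 0 < u) (hT3 : IsTT3Set (gammaMap x v₀ ⁻¹' M) r u)
    (hvT3 : OfTypeTT3 M x v) (hne : v ≠ v₀) (hclose : ‖v - v₀‖ ≤ min (1/2) (u/4)) :
    False := by
  obtain ⟨hsub, n, f, hDC, hmono, hgraphs, hbetween⟩ := hT3
  set s := ⟪v, rot90 v₀⟫ with hsdef
  have hη2 : min (1/2:ℝ) (u/4) ≤ 1/2 := min_le_left _ _
  have hsne : s ≠ 0 := s_ne_zero hv hv₀ hne (le_trans hclose hη2)
  have hspos : 0 < |s| := abs_pos.mpr hsne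
  have hf0 : ∀ i < n, f i 0 = 0 := by
    intro i hi
    have hmem : (!₂[0, f i 0] : E2) ∈ ⋃ j ∈ Finset.range n, _root_.graphOn (f j) r := by
      simp only [mem_iUnion, exists_prop]
      exact ⟨i, Finset.mem_range.mpr hi, 0, ⟨le_refl _, hr⟩, rfl⟩
    rw [← hgraphs] at hmem
    obtain ⟨h1, h2, h3, h4⟩ := hmem.2
    have e0 : (!₂[0, f i 0] : E2) 0 = 0 := rfl
    have e1 : (!₂[0, f i 0] : E2) 1 = f i 0 := rfl
    rw [e0] at h3 h4
    rw [e1] at h3 h4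
    simp only [zero_mul, neg_zero] at h3 h4
    linarith
  have huni : ∃ τ > 0, ∀ i < n, ∀ t, 0 ≤ t → t < τ → |f i t| ≤ (|s|/4) * t := by
    apply exists_uniform_tau
    · intro i τ' τ hle hP t ht0 htτ
      exact hP t ht0 (lt_of_lt_of_le htτ hle)
    · intro i hi
      exact deriv_zero_bound (hf0 i hi) (hDC i hi).2 (by positivity)
  obtain ⟨τ, hτ, hτbound⟩ := huni
  have hδpos : 0 < min (r/2) (τ/2) := lt_min (half_pos hr) (half_pos hτ)
  have hεpos : (0:ℝ) < |s|/4 := by positivity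
  have hεle : |s|/4 ≤ min (1/2) (u/4) := by
    have h1 := le_trans (abs_s_le hv hv₀) hclose
    have hηpos : 0 < min (1/2:ℝ) (u/4) := lt_min (by norm_num) (by positivity)
    linarith
  obtain ⟨q, a, b, hqfr, ha, haδ, hb, hq0, hq1, hlow, hhigh, habs, habs2, hcone1, hcone2⟩ :=
    common_setup hv hv₀ hxbd hvT3 hu hδpos hεpos hεle hclose
  have har : a < r/2 := lt_of_lt_of_le haδ (min_le_left _ _)
  have haτ : a < τ/2 := lt_of_lt_of_le haδ (min_le_right _ _)
  have hqcone : q ∈ coneSet r (2*u) := ⟨by nlinarith, by nlinarith, hcone2, hcone1⟩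
  have hqmem : q ∈ ⋃ j ∈ Finset.range n, _root_.graphOn (f j) r := by
    rw [← hgraphs]
    exact ⟨hqfr, hsub ⟨hqfr, hqcone⟩⟩
  simp only [mem_iUnion, _root_.graphOn, mem_image, exists_prop] at hqmem
  obtain ⟨i, hi, t, ⟨ht0, htr⟩, hteq⟩ := hqmem
  have hip : i < n := Finset.mem_range.mp hi
  have ht : t = q 0 := congrArg (fun p : E2 => p 0) hteq
  have hfq : f i (q 0) = q 1 := by have := congrArg (fun p : E2 => p 1) hteq; rwa [ht] at this
  have hq0τ : q 0 < τ := by nlinarith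
  have hq0nn : 0 ≤ q 0 := by nlinarith
  have hup : |q 1| ≤ (|s|/4) * q 0 := hfq ▸ hτbound i hip (q 0) hq0nn hq0τ
  have hc1 : |⟪v, v₀⟫| ≤ 1 := abs_c_le_one hv hv₀
  have hbc : |b * ⟪v, v₀⟫| ≤ (|s|/4) * a := by
    rw [abs_mul]
    calc |b| * |⟪v, v₀⟫| ≤ |b| * 1 := mul_le_mul_of_nonneg_left hc1 (abs_nonneg _)
    _ = |b| := mul_one _
    _ ≤ (|s|/4) * a := hb
  have hlowbd : (3/4) * |s| * a ≤ |q 1| := by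
    have heq : a * s = q 1 + (-(b * ⟪v, v₀⟫)) := by rw [hq1]; ring
    have htri : |a * s| ≤ |q 1| + |b * ⟪v, v₀⟫| := by
      rw [heq]
      calc |q 1 + -(b * ⟪v, v₀⟫)| ≤ |q 1| + |-(b * ⟪v, v₀⟫)| := abs_add_le _ _
      _ = |q 1| + |b * ⟪v, v₀⟫| := by rw [abs_neg]
    have has : |a * s| = a * |s| := by rw [abs_mul, abs_of_pos ha]
    linarith
  have hup2 : |q 1| ≤ (|s|/2) * a := by
    have h2 := mul_le_mul_of_nonneg_left hhigh (le_of_lt hεpos)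
    calc |q 1| ≤ |s|/4 * q 0 := hup
    _ ≤ |s|/4 * (2 * a) := h2
    _ = |s|/2 * a := by ring
  have hsa : 0 < |s| * a := mul_pos hspos ha
  linarith

/-- Let `M ⊆ ℝ²` be closed and `x ∈ M ∩ ∂M`.  If for every unit vector
`v` the set `M` is of type `𝒯¹`, `𝒯²` or `𝒯³` at `x` in direction `v`, then the set of unit
vectors `v` for which `M` is of type `𝒯³` at `x` in direction `v` is finite. -/
theorem finitely_many_T3_directions
    (M : Set (EuclideanSpace ℝ (Fin 2))) (hMcl : IsClosed M)
    (x : EuclideanSpace ℝ (Fin 2)) (hxM : x ∈ M) (hxbd : x ∈ frontier M)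
    (h : ∀ v : EuclideanSpace ℝ (Fin 2), ‖v‖ = 1 →
      OfTypeTT1 M x v ∨ OfTypeTT2 M x v ∨ OfTypeTT3 M x v) :
    {v : EuclideanSpace ℝ (Fin 2) | ‖v‖ = 1 ∧ OfTypeTT3 M x v}.Finite := by
  by_contra hinf
  have hS : {v : E2 | ‖v‖ = 1 ∧ OfTypeTT3 M x v}.Infinite := hinf
  have hsphere : {v : E2 | ‖v‖ = 1 ∧ OfTypeTT3 M x v} ⊆ Metric.sphere (0 : E2) 1 := by
    intro v hv
    simpa [mem_sphere_iff_norm] using hv.1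
  obtain ⟨v₀, hv₀s, hacc⟩ :=
    hS.exists_accPt_of_subset_isCompact (isCompact_sphere 0 1) hsphere
  have hv₀ : ‖v₀‖ = 1 := by simpa [mem_sphere_iff_norm] using hv₀s
  rw [accPt_iff_nhds] at hacc
  rcases h v₀ hv₀ with h1 | h2 | h3
  · obtain ⟨r, u, hr, hu, hT1⟩ := h1
    have hηpos : 0 < min (1/2 : ℝ) (u/4) := lt_min (by norm_num) (by positivity)
    obtain ⟨y, ⟨hyball, hy1, hyT3⟩, hyne⟩ :=
      hacc (Metric.ball v₀ (min (1/2) (u/4))) (Metric.ball_mem_nhds _ hηpos)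
    exact case_t1 hMcl hy1 hv₀ hxbd hr hu hT1 hyT3
      (le_of_lt (by simpa [mem_ball_iff_norm, dist_eq_norm] using hyball))
  · obtain ⟨r, u, hr, hu, hT2⟩ := h2
    have hηpos : 0 < min (1/2 : ℝ) (u/4) := lt_min (by norm_num) (by positivity)
    obtain ⟨y, ⟨hyball, hy1, hyT3⟩, hyne⟩ :=
      hacc (Metric.ball v₀ (min (1/2) (u/4))) (Metric.ball_mem_nhds _ hηpos)
    exact case_t2 hy1 hv₀ hxbd hr hu hT2 hyT3
      (le_of_lt (by simpa [mem_ball_iff_norm, dist_eq_norm] using hyball))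
  · obtain ⟨r, u, hr, hu, hT3⟩ := h3
    have hηpos : 0 < min (1/2 : ℝ) (u/4) := lt_min (by norm_num) (by positivity)
    obtain ⟨y, ⟨hyball, hy1, hyT3⟩, hyne⟩ :=
      hacc (Metric.ball v₀ (min (1/2) (u/4))) (Metric.ball_mem_nhds _ hηpos)
    exact case_t3 hy1 hv₀ hxbd hr hu hT3 hyT3 hyne
      (le_of_lt (by simpa [mem_ball_iff_norm, dist_eq_norm] using hyball))
end
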